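/- arXiv:1601.04507 — 5 statements merged into one kernel-verified Lean document; each statement's English description precedes it below -/
import Mathlib

section
/- Let C ⊆ Z_{p^r}^n be a linear block code with p-dimension k. Then d(C) ≤ n − ⌈k/r⌉ + 1. -/
/-- `(v_1, ..., v_k)` is a `p`-basis of the `Z_{p^r}`-submodule `M` of `Z_{p^r}^n`:
the `v_i` lie in `M` and `A_p`-span `M`, form a `p`-generator sequence
(`p • v_i` is an `A_p`-linear combination of `v_{i+1}, ..., v_k`, and `p • v_k = 0`),
and are `p`-linearly independent, where `A_p = {0, 1, ..., p-1} ⊂ Z_{p^r}`. -/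
def IsPBasis (p r n k : ℕ) (v : Fin k → (Fin n → ZMod (p ^ r)))
    (M : Submodule (ZMod (p ^ r)) (Fin n → ZMod (p ^ r))) : Prop :=
  (∀ i, v i ∈ M) ∧
  (∀ x ∈ M, ∃ a : Fin k → ℕ, (∀ i, a i < p) ∧ x = ∑ i, (a i : ZMod (p ^ r)) • v i) ∧
  (∀ i : Fin k, ∃ a : Fin k → ℕ, (∀ j, a j < p) ∧ (∀ j : Fin k, (j : ℕ) ≤ (i : ℕ) → a j = 0) ∧
    (p : ZMod (p ^ r)) • v i = ∑ j, (a j : ZMod (p ^ r)) • v j) ∧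
  (∀ a : Fin k → ℕ, (∀ i, a i < p) → ∑ i, (a i : ZMod (p ^ r)) • v i = 0 → ∀ i, a i = 0)

section aux

variable {p r n k : ℕ} {v : Fin k → (Fin n → ZMod (p ^ r))}

/-- Greedy left-to-right reduction of an integer relation to an `A_p` relation. -/
lemma reduce_aux (hp : 0 < p)
    (hgen : ∀ i : Fin k, ∃ a : Fin k → ℕ, (∀ j, a j < p) ∧
      (∀ j : Fin k, (j : ℕ) ≤ (i : ℕ) → a j = 0) ∧
      (p : ZMod (p ^ r)) • v i = ∑ j, (a j : ZMod (p ^ r)) • v j) :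
    ∀ fuel m : ℕ, k ≤ m + fuel → ∀ c : Fin k → ℤ,
    (∀ j : Fin k, (j : ℕ) < m → 0 ≤ c j ∧ c j < p) →
    ∑ j, (c j : ZMod (p ^ r)) • v j = 0 →
    ∃ d : Fin k → ℕ, (∀ j, d j < p) ∧ (∑ j, ((d j : ℕ) : ZMod (p ^ r)) • v j = 0) ∧
      (∀ j : Fin k, (j : ℕ) < m → (d j : ℤ) = c j) ∧
      (∀ j : Fin k, (j : ℕ) = m → (d j : ℤ) % p = c j % p) := by
  intro fuel
  induction fuel with
  | zero =>
      intro m hm c hc hsum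
      refine ⟨fun j => (c j).toNat, ?_, ?_, ?_, ?_⟩
      · intro j
        have h := hc j (by omega)
        show (c j).toNat < p
        omega
      · rw [← hsum]
        refine Finset.sum_congr rfl fun j _ => ?_
        have h := hc j (by omega)
        congr 1
        rw [← Int.cast_natCast, Int.toNat_of_nonneg h.1]
      · intro j hj
        have h := hc j (by omega)
        rw [Int.toNat_of_nonneg h.1]
      · intro j hj
        exfalso; omega
  | succ fuel ih =>
      intro m hm c hc hsum
      by_cases hkm : k ≤ m
      · refine ⟨fun j => (c j).toNat, ?_, ?_, ?_, ?_⟩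
        · intro j
          have h := hc j (by omega)
          show (c j).toNat < p
          omega
        · rw [← hsum]
          refine Finset.sum_congr rfl fun j _ => ?_
          have h := hc j (by omega)
          congr 1
          rw [← Int.cast_natCast, Int.toNat_of_nonneg h.1]
        · intro j hj
          have h := hc j (by omega)
          rw [Int.toNat_of_nonneg h.1]
        · intro j hj
          exfalso
          have := j.isLt; omega
      · push_neg at hkm
        set i : Fin k := ⟨m, hkm⟩ with hi
        have hival : (i : ℕ) = m := rfl
        obtain ⟨a, hap, ha0, hav⟩ := hgen i
        set q : ℤ := c i / p with hq
        set s : ℤ := c i % p with hs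
        have hs0 : 0 ≤ s := Int.emod_nonneg _ (by exact_mod_cast hp.ne')
        have hsp : s < p := Int.emod_lt_of_pos _ (by exact_mod_cast hp)
        have heq : (p : ℤ) * q + s = c i := Int.mul_ediv_add_emod _ _
        have hai : a i = 0 := ha0 i le_rfl
        set c' : Fin k → ℤ := fun j => if j = i then s else c j + q * (a j : ℤ) with hc'
        have hsum' : ∑ j, (c' j : ZMod (p ^ r)) • v j = 0 := by
          have step : ∀ j : Fin k, (c' j : ZMod (p ^ r)) • v j =
              ((c j + q * (a j : ℤ) : ℤ) : ZMod (p ^ r)) • v j -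
              (if j = i then (((p : ℤ) * q : ℤ) : ZMod (p ^ r)) • v i else 0) := by
            intro j
            by_cases h : j = i
            · subst h
              simp only [hc', eq_self_iff_true, if_true, hai, Nat.cast_zero, mul_zero,
                add_zero]
              rw [← sub_smul]
              congr 1
              have hz : s = c i - (p : ℤ) * q := by linarith
              rw [hz]
              push_cast
              ring
            · simp [hc', h]
          rw [Finset.sum_congr rfl fun j _ => step j, Finset.sum_sub_distrib,
            Finset.sum_ite_eq' Finset.univ i]
          simp only [Finset.mem_univ, if_pos]
          have expand : ∑ j, ((c j + q * (a j : ℤ) : ℤ) : ZMod (p ^ r)) • v j =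
              (∑ j, (c j : ZMod (p ^ r)) • v j) +
              ((q : ℤ) : ZMod (p ^ r)) • ∑ j, ((a j : ℕ) : ZMod (p ^ r)) • v j := by
            rw [Finset.smul_sum, ← Finset.sum_add_distrib]
            refine Finset.sum_congr rfl fun j _ => ?_
            rw [smul_smul, ← add_smul]
            congr 1
            push_cast
            ring
          rw [expand, hsum, zero_add, ← hav, smul_smul, sub_eq_zero]
          congr 1
          push_cast
          ring
        have hnext : k ≤ (m + 1) + fuel := by omega
        have hc'bound : ∀ j : Fin k, (j : ℕ) < m + 1 → 0 ≤ c' j ∧ c' j < p := by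
          intro j hj
          by_cases h : j = i
          · subst h; simp only [hc', if_pos rfl]; exact ⟨hs0, hsp⟩
          · have hjm : (j : ℕ) < m := by
              rcases Nat.lt_succ_iff_lt_or_eq.mp hj with h' | h'
              · exact h'
              · exact absurd (Fin.ext h' : j = i) h
            have haj : a j = 0 := ha0 j (by rw [hival]; omega)
            simp only [hc', if_neg h, haj]
            simpa using hc j hjm
        obtain ⟨d, hd1, hd2, hd3, _⟩ := ih (m + 1) hnext c' hc'bound hsum'
        refine ⟨d, hd1, hd2, ?_, ?_⟩
        · intro j hj
          have := hd3 j (by omega)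
          rw [this]
          have h : j ≠ i := by intro h; rw [h, hival] at hj; omega
          have haj : a j = 0 := ha0 j (by rw [hival]; omega)
          simp [hc', h, haj]
        · intro j hj
          have hji : j = i := Fin.ext (by rw [hival]; exact hj)
          have h3 := hd3 j (by omega)
          rw [h3, hji]
          simp only [hc', if_pos rfl, hs]
          exact Int.emod_emod_of_dvd _ dvd_rfl

/-- An integer relation with coefficients of absolute value `< p` is trivial. -/
lemma int_rel_zero (hp : 0 < p)
    (hgen : ∀ i : Fin k, ∃ a : Fin k → ℕ, (∀ j, a j < p) ∧
      (∀ j : Fin k, (j : ℕ) ≤ (i : ℕ) → a j = 0) ∧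
      (p : ZMod (p ^ r)) • v i = ∑ j, (a j : ZMod (p ^ r)) • v j)
    (hindep : ∀ a : Fin k → ℕ, (∀ i, a i < p) →
      ∑ i, (a i : ZMod (p ^ r)) • v i = 0 → ∀ i, a i = 0) :
    ∀ fuel m : ℕ, k ≤ m + fuel → ∀ c : Fin k → ℤ,
    (∀ j, -(p : ℤ) < c j ∧ c j < p) →
    (∀ j : Fin k, (j : ℕ) < m → c j = 0) →
    ∑ j, (c j : ZMod (p ^ r)) • v j = 0 → ∀ j, c j = 0 := by
  intro fuel
  induction fuel with
  | zero =>
      intro m hm c _ hzero _ j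
      exact hzero j (by omega)
  | succ fuel ih =>
      intro m hm c hbound hzero hsum
      by_cases hkm : k ≤ m
      · intro j; exact hzero j (by have := j.isLt; omega)
      · push_neg at hkm
        have hcm : ∀ j : Fin k, (j : ℕ) < m → 0 ≤ c j ∧ c j < p := by
          intro j hj
          rw [hzero j hj]
          exact ⟨le_refl 0, by exact_mod_cast hp⟩
        obtain ⟨d, hd1, hd2, _, hd4⟩ :=
          reduce_aux hp hgen k m (by omega) c hcm hsum
        have hdz : ∀ j, d j = 0 := hindep d hd1 hd2
        set i : Fin k := ⟨m, hkm⟩ with hi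
        have hci : c i = 0 := by
          have h := hd4 i rfl
          rw [hdz i] at h
          simp only [Nat.cast_zero, Int.zero_emod] at h
          have hdvd : (p : ℤ) ∣ c i := Int.dvd_of_emod_eq_zero h.symm
          exact Int.eq_zero_of_abs_lt_dvd hdvd (abs_lt.mpr (hbound i))
        refine ih (m + 1) (by omega) c hbound ?_ hsum
        intro j hj
        rcases Nat.lt_succ_iff_lt_or_eq.mp hj with h' | h'
        · exact hzero j h'
        · have : j = i := Fin.ext h'
          rw [this]; exact hci

end aux

/-- Singleton bound in terms of the `p`-dimension (Corollary 2.1): a linear block code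
`C ⊆ Z_{p^r}^n` of `p`-dimension `k` satisfies `d(C) ≤ n - ⌈k/r⌉ + 1`, i.e. it contains
a nonzero codeword of Hamming weight at most `n - ⌈k/r⌉ + 1`. -/
theorem block_code_singleton_pdim (p r n k : ℕ) (hp : p.Prime) (hr : 0 < r) (hk : 0 < k)
    (C : Submodule (ZMod (p ^ r)) (Fin n → ZMod (p ^ r)))
    (v : Fin k → (Fin n → ZMod (p ^ r))) (hv : IsPBasis p r n k v C) :
    ∃ w ∈ C, w ≠ 0 ∧ (hammingNorm w : ℤ) ≤ (n : ℤ) - ⌈(k : ℚ) / r⌉ + 1 := by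
  obtain ⟨hmem, _, hgen, hindep⟩ := hv
  haveI : NeZero (p ^ r) := ⟨pow_ne_zero _ hp.ne_zero⟩
  have hp0 : 0 < p := hp.pos
  set Q : ℤ := ⌈(k : ℚ) / r⌉ with hQ
  have hQ1 : 1 ≤ Q := by
    have : (0 : ℤ) < Q := Int.lt_ceil.mpr (by push_cast; positivity)
    omega
  have hrQ : (r : ℤ) * (Q - 1) < k := by
    have h1 : ((Q - 1 : ℤ) : ℚ) < (k : ℚ) / r := Int.lt_ceil.mp (by omega)
    have hr' : (0 : ℚ) < r := by exact_mod_cast hr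
    have h2 : ((Q - 1 : ℤ) : ℚ) * r < k := (lt_div_iff₀ hr').mp h1
    have h3 : (((r : ℤ) * (Q - 1) : ℤ) : ℚ) < ((k : ℤ) : ℚ) := by
      push_cast at h2 ⊢
      linarith
    exact_mod_cast h3
  set t : ℕ := (Q - 1).toNat with htdef
  have htQ : (t : ℤ) = Q - 1 := Int.toNat_of_nonneg (by omega)
  have hrt : r * t < k := by
    have : (r : ℤ) * t < k := by rw [htQ]; exact hrQ
    exact_mod_cast this
  set t' : ℕ := min t n with ht'
  have hle : t' ≤ n := min_le_right _ _
  have hrt' : r * t' < k := lt_of_le_of_lt (Nat.mul_le_mul_left r (min_le_left _ _)) hrt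
  -- pigeonhole
  set φ : (Fin k → Fin p) → (Fin t' → ZMod (p ^ r)) :=
    fun a j => (∑ i, ((a i : ℕ) : ZMod (p ^ r)) • v i) (Fin.castLE hle j) with hφ
  have hcard : Fintype.card (Fin t' → ZMod (p ^ r)) < Fintype.card (Fin k → Fin p) := by
    rw [Fintype.card_fun, Fintype.card_fun, ZMod.card, Fintype.card_fin, Fintype.card_fin,
      Fintype.card_fin, ← pow_mul]
    exact Nat.pow_lt_pow_right hp.one_lt hrt'
  obtain ⟨a, b, hab, hfab⟩ := Fintype.exists_ne_map_eq_of_card_lt φ hcard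
  set c : Fin k → ℤ := fun i => (a i : ℤ) - (b i : ℤ) with hc
  set w : Fin n → ZMod (p ^ r) :=
    (∑ i, ((a i : ℕ) : ZMod (p ^ r)) • v i) - (∑ i, ((b i : ℕ) : ZMod (p ^ r)) • v i) with hw
  have hcw : ∑ i, (c i : ZMod (p ^ r)) • v i = w := by
    rw [hw, ← Finset.sum_sub_distrib]
    refine Finset.sum_congr rfl fun i _ => ?_
    rw [← sub_smul]
    congr 1
    simp only [hc]
    push_cast
    ring
  have hbound : ∀ j, -(p : ℤ) < c j ∧ c j < p := by
    intro j
    have h1 := (a j).isLt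
    have h2 := (b j).isLt
    simp only [hc]
    omega
  have hwne : w ≠ 0 := by
    intro h0
    rw [h0] at hcw
    have := int_rel_zero hp0 hgen hindep k 0 (by omega) c hbound (by omega) hcw
    apply hab
    funext j
    have := this j
    simp only [hc] at this
    exact Fin.ext (by omega)
  have hwC : w ∈ C := by
    apply Submodule.sub_mem <;>
      exact Submodule.sum_mem _ fun i _ => Submodule.smul_mem _ _ (hmem i)
  have hvanish : ∀ j : Fin t', w (Fin.castLE hle j) = 0 := by
    intro j
    have h := congrFun hfab j
    simp only [hw, Pi.sub_apply]
    rw [sub_eq_zero]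
    exact h
  by_cases htn : t ≤ n
  · have ht't : t' = t := min_eq_left htn
    -- hamming norm bound
    have hnorm : hammingNorm w ≤ n - t' := by
      have hsub : Finset.univ.filter (fun i => w i ≠ 0) ⊆
          (Finset.univ.image (Fin.castLE hle))ᶜ := by
        intro i hi
        simp only [Finset.mem_filter, Finset.mem_univ, true_and] at hi
        simp only [Finset.mem_compl, Finset.mem_image, Finset.mem_univ, true_and]
        rintro ⟨j, rfl⟩
        exact hi (hvanish j)
      have hcardim : (Finset.univ.image (Fin.castLE hle)).card = t' := by
        rw [Finset.card_image_of_injective _ (Fin.castLE_injective hle), Finset.card_univ,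
          Fintype.card_fin]
      calc hammingNorm w ≤ (Finset.univ.image (Fin.castLE hle))ᶜ.card :=
            Finset.card_le_card hsub
        _ = n - t' := by rw [Finset.card_compl, hcardim, Fintype.card_fin]
    refine ⟨w, hwC, hwne, ?_⟩
    have h1 : (hammingNorm w : ℤ) ≤ (n : ℤ) - t' := by
      have := hnorm
      have ht'n : t' ≤ n := hle
      omega
    rw [ht't, htQ] at h1
    omega
  · exfalso
    apply hwne
    push_neg at htn
    have ht'n : t' = n := min_eq_right (by omega)
    funext j
    have hj : (j : ℕ) < t' := by omega
    have := hvanish ⟨j, hj⟩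
    have hcast : Fin.castLE hle ⟨(j : ℕ), hj⟩ = j := Fin.ext rfl
    rw [hcast] at this
    simpa using this
end

section
/- Let (v_1, ..., v_k) be a p-basis of a Z_{p^r}-submodule M of Z_{p^r}^n, and suppose p·v_i is an A_p-linear combination of v_j, v_{j+1}, ..., v_k for some j > i. Then the reordered tuple (v_1, ..., v_{i-1}, v_{i+1}, ..., v_{j-1}, v_i, v_j, ..., v_k) is also a p-basis of M. -/
/-- Lemma 2.1(2): if `p • v_i` is an `A_p`-linear combination of `v_j, ..., v_k` for some
`j > i`, then moving `v_i` to just before position `j` (i.e. the reordered tuple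
`(v_1, ..., v_{i-1}, v_{i+1}, ..., v_{j-1}, v_i, v_j, ..., v_k)`) again gives a
`p`-basis of `M`. -/
theorem pbasis_reorder (p r n k : ℕ) (hp : p.Prime) (hr : 0 < r)
    (M : Submodule (ZMod (p ^ r)) (Fin n → ZMod (p ^ r)))
    (v : Fin k → (Fin n → ZMod (p ^ r))) (hv : IsPBasis p r n k v M)
    (i : Fin k) (j : ℕ) (hij : (i : ℕ) < j) (hjk : j ≤ k)
    (h : ∃ a : Fin k → ℕ, (∀ t, a t < p) ∧ (∀ t : Fin k, (t : ℕ) < j → a t = 0) ∧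
      (p : ZMod (p ^ r)) • v i = ∑ t, (a t : ZMod (p ^ r)) • v t) :
    IsPBasis p r n k
      (fun t : Fin k =>
        if (t : ℕ) < (i : ℕ) then v t
        else if h2 : (t : ℕ) + 1 < j then v ⟨(t : ℕ) + 1, by omega⟩
        else if (t : ℕ) + 1 = j then v i
        else v t) M := by
  obtain ⟨hmem, hspan, hstep, hind⟩ := hv
  obtain ⟨a, hap, haj, hpa⟩ := h
  have hik : (i : ℕ) < k := i.isLt
  set σ : Fin k → Fin k := fun t =>
    if (t : ℕ) < (i : ℕ) then t
    else if h2 : (t : ℕ) + 1 < j then ⟨(t : ℕ) + 1, by omega⟩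
    else if (t : ℕ) + 1 = j then i
    else t with hσ
  have hσval : ∀ t : Fin k, ((σ t : Fin k) : ℕ) =
      if (t : ℕ) < (i : ℕ) then (t : ℕ)
      else if (t : ℕ) + 1 < j then (t : ℕ) + 1
      else if (t : ℕ) + 1 = j then (i : ℕ)
      else (t : ℕ) := by
    intro t
    simp only [hσ]
    split_ifs <;> rfl
  have hfun : (fun t : Fin k =>
      if (t : ℕ) < (i : ℕ) then v t
      else if h2 : (t : ℕ) + 1 < j then v ⟨(t : ℕ) + 1, by omega⟩
      else if (t : ℕ) + 1 = j then v i
      else v t) = fun t => v (σ t) := by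
    funext t
    simp only [hσ]
    split_ifs <;> rfl
  have hinj : Function.Injective σ := by
    intro s t hst
    have h1 := hσval s
    have h2 := hσval t
    rw [hst] at h1
    apply Fin.ext
    split_ifs at h1 h2 <;> omega
  have hbij : Function.Bijective σ := Finite.injective_iff_bijective.mp hinj
  have hsum : ∀ f : Fin k → (Fin n → ZMod (p ^ r)), ∑ t, f (σ t) = ∑ u, f u :=
    fun f => Fintype.sum_bijective σ hbij _ f (fun t => rfl)
  rw [hfun]
  refine ⟨fun t => hmem (σ t), ?_, ?_, ?_⟩
  · intro x hx
    obtain ⟨b, hbp, hbe⟩ := hspan x hx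
    refine ⟨b ∘ σ, fun t => hbp _, ?_⟩
    rw [hbe, ← hsum (fun u => ((b u : ZMod (p ^ r))) • v u)]
    rfl
  · intro t
    by_cases hA : ¬((t : ℕ) < (i : ℕ)) ∧ ¬((t : ℕ) + 1 < j) ∧ (t : ℕ) + 1 = j
    · refine ⟨a ∘ σ, fun t' => hap _, ?_, ?_⟩
      · intro t' ht'
        apply haj
        have h1 := hσval t'
        split_ifs at h1 <;> omega
      · have hσt : σ t = i := by
          simp only [hσ]
          rw [if_neg hA.1, dif_neg hA.2.1, if_pos hA.2.2]
        beta_reduce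
        rw [hσt, hpa, ← hsum (fun u => ((a u : ZMod (p ^ r))) • v u)]
        rfl
    · obtain ⟨b, hbp, hbz, hbe⟩ := hstep (σ t)
      refine ⟨b ∘ σ, fun t' => hbp _, ?_, ?_⟩
      · intro t' ht'
        apply hbz
        have h1 := hσval t'
        have h2 := hσval t
        split_ifs at h1 h2 <;> omega
      · beta_reduce
        rw [hbe, ← hsum (fun u => ((b u : ZMod (p ^ r))) • v u)]
        rfl
  · intro c hcp hc0
    let e : Fin k ≃ Fin k := Equiv.ofBijective σ hbij
    have hes : ∀ t, e.symm (σ t) = t := fun t => e.symm_apply_apply t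
    have h0 : ∑ u, ((c (e.symm u) : ZMod (p ^ r))) • v u = 0 := by
      rw [← hsum (fun u => ((c (e.symm u) : ZMod (p ^ r))) • v u)]
      simpa only [hes] using hc0
    intro t
    have ht := hind (fun u => c (e.symm u)) (fun u => hcp _) h0 (σ t)
    simp only [hes] at ht
    exact ht
end

section
/- If (v_1(D), ..., v_k(D)) is a p-generator sequence of polynomial vectors in Z_{p^r}[D]^n, then the set of all A_p[D]-linear combinations of v_1(D), ..., v_k(D) equals the Z_{p^r}[D]-submodule generated by v_1(D), ..., v_k(D); in particular the p-span is a Z_{p^r}[D]-submodule of Z_{p^r}[D]^n. -/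
/-- `a ∈ A_p[D]`: every coefficient of the polynomial `a` over `Z_{p^r}` lies in
`A_p = {0, 1, ..., p-1}`. -/
def ApPoly (p r : ℕ) (a : Polynomial (ZMod (p ^ r))) : Prop :=
  ∀ m : ℕ, ∃ c < p, a.coeff m = (c : ZMod (p ^ r))

/-- `(v_1(D), ..., v_k(D))` is a `p`-generator sequence: `p • v_i(D)` is an
`A_p[D]`-linear combination of `v_{i+1}(D), ..., v_k(D)` and `p • v_k(D) = 0`. -/
def PGenSeqPoly (p r n k : ℕ) (v : Fin k → (Fin n → Polynomial (ZMod (p ^ r)))) : Prop :=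
  ∀ i : Fin k, ∃ a : Fin k → Polynomial (ZMod (p ^ r)), (∀ j, ApPoly p r (a j)) ∧
    (∀ j : Fin k, (j : ℕ) ≤ (i : ℕ) → a j = 0) ∧
    (p : Polynomial (ZMod (p ^ r))) • v i = ∑ j, a j • v j

namespace PspanAux

noncomputable def sPart (p r : ℕ) (f : Polynomial (ZMod (p ^ r))) : Polynomial (ZMod (p ^ r)) :=
  ⟨⟨f.toFinsupp.coeff.mapRange (fun x => ((x.val % p : ℕ) : ZMod (p ^ r))) (by simp)⟩⟩

noncomputable def qPart (p r : ℕ) (f : Polynomial (ZMod (p ^ r))) : Polynomial (ZMod (p ^ r)) :=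
  ⟨⟨f.toFinsupp.coeff.mapRange (fun x => ((x.val / p : ℕ) : ZMod (p ^ r))) (by simp)⟩⟩

lemma coeff_sPart (p r : ℕ) (f : Polynomial (ZMod (p ^ r))) (m : ℕ) :
    (sPart p r f).coeff m = (((f.coeff m).val % p : ℕ) : ZMod (p ^ r)) := rfl

lemma coeff_qPart (p r : ℕ) (f : Polynomial (ZMod (p ^ r))) (m : ℕ) :
    (qPart p r f).coeff m = (((f.coeff m).val / p : ℕ) : ZMod (p ^ r)) := rfl

lemma apPoly_sPart (p r : ℕ) (hp : 0 < p) (f : Polynomial (ZMod (p ^ r))) :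
    ApPoly p r (sPart p r f) := fun m =>
  ⟨(f.coeff m).val % p, Nat.mod_lt _ hp, rfl⟩

lemma apPoly_zero (p r : ℕ) (hp : 0 < p) : ApPoly p r 0 := fun _ => ⟨0, hp, by simp⟩

lemma apPoly_one (p r : ℕ) (hp : 1 < p) : ApPoly p r 1 := by
  intro m
  rcases Nat.eq_zero_or_pos m with hm | hm
  · exact ⟨1, hp, by simp [hm]⟩
  · exact ⟨0, Nat.lt_of_lt_of_le Nat.one_pos hp.le, by simp [Polynomial.coeff_one, hm.ne']⟩

lemma decomp (p r : ℕ) (hpr : p ^ r ≠ 0) (f : Polynomial (ZMod (p ^ r))) :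
    f = sPart p r f + (p : Polynomial (ZMod (p ^ r))) * qPart p r f := by
  haveI : NeZero (p ^ r) := ⟨hpr⟩
  ext m
  rw [Polynomial.coeff_add, coeff_sPart, Polynomial.coeff_natCast_mul, coeff_qPart]
  have h : (((f.coeff m).val : ℕ) : ZMod (p ^ r)) = f.coeff m := ZMod.natCast_rightInverse _
  conv_lhs => rw [← h]
  rw [← Nat.cast_mul, ← Nat.cast_add]
  rw [Nat.mod_add_div]

variable {p r n : ℕ}

/-- any scalar multiple of `w` decomposes as ApPoly multiple plus multiple of `p • w`. -/
lemma fsmul (hpr : p ^ r ≠ 0) (f : Polynomial (ZMod (p ^ r)))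
    (w : Fin n → Polynomial (ZMod (p ^ r))) :
    f • w = (sPart p r f) • w + (qPart p r f) • ((p : Polynomial (ZMod (p ^ r))) • w) := by
  rw [smul_smul, ← add_smul]
  congr 1
  rw [mul_comm]
  exact decomp p r hpr f

lemma step (hp : 1 < p) (hpr : p ^ r ≠ 0)
    (w : Fin n → Polynomial (ZMod (p ^ r)))
    (N : Submodule (Polynomial (ZMod (p ^ r))) (Fin n → Polynomial (ZMod (p ^ r))))
    (hpw : (p : Polynomial (ZMod (p ^ r))) • w ∈ N) :
    {x | ∃ s, ApPoly p r s ∧ ∃ m ∈ N, x = s • w + m}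
      = ((N ⊔ Submodule.span (Polynomial (ZMod (p ^ r))) {w} :
          Submodule (Polynomial (ZMod (p ^ r))) (Fin n → Polynomial (ZMod (p ^ r)))) :
          Set (Fin n → Polynomial (ZMod (p ^ r)))) := by
  have hp0 : 0 < p := Nat.lt_of_lt_of_le Nat.one_pos hp.le
  apply Set.Subset.antisymm
  · rintro x ⟨s, -, m, hm, rfl⟩
    exact Submodule.add_mem _
      (Submodule.mem_sup_right (Submodule.smul_mem _ _ (Submodule.subset_span rfl)))
      (Submodule.mem_sup_left hm)
  · -- the p-span set is a submodule
    let U : Submodule (Polynomial (ZMod (p ^ r))) (Fin n → Polynomial (ZMod (p ^ r))) :=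
      { carrier := {x | ∃ s, ApPoly p r s ∧ ∃ m ∈ N, x = s • w + m}
        zero_mem' := ⟨0, apPoly_zero p r hp0, 0, N.zero_mem, by simp⟩
        add_mem' := by
          rintro x y ⟨s, -, m, hm, rfl⟩ ⟨s', -, m', hm', rfl⟩
          refine ⟨sPart p r (s + s'), apPoly_sPart p r hp0 _,
            (qPart p r (s + s')) • ((p : Polynomial (ZMod (p ^ r))) • w) + (m + m'),
            N.add_mem (N.smul_mem _ hpw) (N.add_mem hm hm'), ?_⟩
          have := fsmul hpr (s + s') w
          rw [add_smul] at this
          calc s • w + m + (s' • w + m') = (s • w + s' • w) + (m + m') := by abel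
          _ = _ := by rw [this]; abel
        smul_mem' := by
          rintro c x ⟨s, -, m, hm, rfl⟩
          refine ⟨sPart p r (c * s), apPoly_sPart p r hp0 _,
            (qPart p r (c * s)) • ((p : Polynomial (ZMod (p ^ r))) • w) + c • m,
            N.add_mem (N.smul_mem _ hpw) (N.smul_mem _ hm), ?_⟩
          have := fsmul hpr (c * s) w
          rw [smul_add, smul_smul, this]
          abel }
    have hle : N ⊔ Submodule.span (Polynomial (ZMod (p ^ r))) {w} ≤ U := by
      apply sup_le
      · intro m hm
        exact ⟨0, apPoly_zero p r hp0, m, hm, by simp⟩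
      · rw [Submodule.span_le]
        rintro _ rfl
        exact ⟨1, apPoly_one p r hp, 0, N.zero_mem, by simp⟩
    exact fun x hx => hle hx


lemma main (hp : 1 < p) (hpr : p ^ r ≠ 0) {k : ℕ}
    (v : Fin k → (Fin n → Polynomial (ZMod (p ^ r)))) (hv : PGenSeqPoly p r n k v) :
    ∀ d i, k = i + d →
    {x | ∃ a : Fin k → Polynomial (ZMod (p ^ r)), (∀ j, ApPoly p r (a j)) ∧
        (∀ j : Fin k, (j : ℕ) < i → a j = 0) ∧ x = ∑ j, a j • v j}
      = (Submodule.span (Polynomial (ZMod (p ^ r))) (v '' {j | i ≤ (j : ℕ)}) :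
          Set (Fin n → Polynomial (ZMod (p ^ r)))) := by
  have hp0 : 0 < p := Nat.lt_of_lt_of_le Nat.one_pos hp.le
  intro d
  induction d with
  | zero =>
    intro i hi
    have hi' : i = k := by omega
    have hempty : {j : Fin k | i ≤ (j : ℕ)} = ∅ := by
      ext j
      have := j.isLt
      simp only [Set.mem_setOf_eq, Set.mem_empty_iff_false, iff_false]
      omega
    rw [hempty]
    simp only [Set.image_empty, Submodule.span_empty]
    ext x
    constructor
    · rintro ⟨a, -, hz, rfl⟩
      have : ∀ j : Fin k, a j = 0 := fun j => hz j (by have := j.isLt; omega)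
      simp [this]
    · intro hx
      refine ⟨0, fun j => apPoly_zero p r hp0, fun j _ => rfl, ?_⟩
      simp only [Submodule.mem_bot, SetLike.mem_coe] at hx
      simp [hx]
  | succ d ih =>
    intro i hi
    have hik : i < k := by omega
    have IH := ih (i + 1) (by omega)
    set i0 : Fin k := ⟨i, hik⟩ with hi0
    have hi0v : (i0 : ℕ) = i := rfl
    set N : Submodule (Polynomial (ZMod (p ^ r))) (Fin n → Polynomial (ZMod (p ^ r))) :=
      Submodule.span (Polynomial (ZMod (p ^ r))) (v '' {j | i + 1 ≤ (j : ℕ)}) with hN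
    have hpw : (p : Polynomial (ZMod (p ^ r))) • v i0 ∈ N := by
      obtain ⟨a, ha, haz, heq⟩ := hv i0
      rw [heq]
      apply Submodule.sum_mem
      intro j _
      rcases Nat.lt_or_ge i (j : ℕ) with h | h
      · exact Submodule.smul_mem _ _ (Submodule.subset_span ⟨j, h, rfl⟩)
      · rw [haz j h]; simp
    have hset : {x | ∃ a : Fin k → Polynomial (ZMod (p ^ r)), (∀ j, ApPoly p r (a j)) ∧
        (∀ j : Fin k, (j : ℕ) < i → a j = 0) ∧ x = ∑ j, a j • v j}
        = {x | ∃ s, ApPoly p r s ∧ ∃ m ∈ N, x = s • v i0 + m} := by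
      ext x
      constructor
      · rintro ⟨a, ha, hz, rfl⟩
        refine ⟨a i0, ha i0, ∑ j, (if j = i0 then 0 else a j) • v j, ?_, ?_⟩
        · rw [← SetLike.mem_coe, ← IH]
          refine ⟨fun j => if j = i0 then 0 else a j, ?_, ?_, rfl⟩
          · intro j
            by_cases h : j = i0
            · simpa [h] using apPoly_zero p r hp0
            · simpa [h] using ha j
          · intro j hj
            by_cases h : j = i0
            · simp [h]
            · have hne : (j : ℕ) ≠ i := fun hc => h (Fin.ext (by omega))
              have : (j : ℕ) < i := by omega
              simp [h, hz j this]
        · have hsplit : ∀ j : Fin k, a j • v j =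
              (if j = i0 then a i0 • v j else 0) + (if j = i0 then 0 else a j) • v j := by
            intro j
            by_cases h : j = i0 <;> simp [h]
          rw [Finset.sum_congr rfl (fun j _ => hsplit j), Finset.sum_add_distrib]
          congr 1
          rw [Finset.sum_ite_eq' Finset.univ i0 (fun j => a i0 • v j)]
          simp
      · rintro ⟨s, hs, m, hm, rfl⟩
        rw [← SetLike.mem_coe, ← IH] at hm
        obtain ⟨b, hb, hbz, rfl⟩ := hm
        have hbi0 : b i0 = 0 := hbz i0 (by omega)
        refine ⟨fun j => if j = i0 then s else b j, ?_, ?_, ?_⟩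
        · intro j
          by_cases h : j = i0
          · simpa [h] using hs
          · simpa [h] using hb j
        · intro j hj
          have h : j ≠ i0 := fun hc => by rw [hc, hi0v] at hj; omega
          have : (j : ℕ) < i + 1 := by omega
          simp [h, hbz j this]
        · have hsplit : ∀ j : Fin k, (if j = i0 then s else b j) • v j =
              (if j = i0 then s • v j else 0) + b j • v j := by
            intro j
            by_cases h : j = i0 <;> simp [h, hbi0]
          rw [Finset.sum_congr rfl (fun j _ => hsplit j), Finset.sum_add_distrib]
          congr 1
          rw [Finset.sum_ite_eq' Finset.univ i0 (fun j => s • v j)]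
          simp
    rw [hset, step hp hpr (v i0) N hpw]
    have hsets : {j : Fin k | i ≤ (j : ℕ)} = insert i0 {j : Fin k | i + 1 ≤ (j : ℕ)} := by
      ext j
      simp only [Set.mem_setOf_eq, Set.mem_insert_iff]
      constructor
      · intro h
        rcases eq_or_lt_of_le h with h' | h'
        · exact Or.inl (show j = i0 from Fin.ext h'.symm)
        · exact Or.inr h'
      · rintro (rfl | h)
        · exact Nat.le_of_eq rfl
        · omega
    have himage : v '' {j : Fin k | i ≤ (j : ℕ)} = insert (v i0) (v '' {j | i + 1 ≤ (j : ℕ)}) := by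
      rw [hsets, Set.image_insert_eq]
    rw [himage, Submodule.span_insert, hN, sup_comm]

end PspanAux

/-- If `(v_1(D), ..., v_k(D))` is a `p`-generator sequence in `Z_{p^r}[D]^n`, then its
`p`-span (the set of all `A_p[D]`-linear combinations) equals the `Z_{p^r}[D]`-submodule
generated by `v_1(D), ..., v_k(D)`. -/
theorem pspan_eq_span (p r n k : ℕ) (hp : p.Prime) (hr : 0 < r)
    (v : Fin k → (Fin n → Polynomial (ZMod (p ^ r)))) (hv : PGenSeqPoly p r n k v) :
    {x : Fin n → Polynomial (ZMod (p ^ r)) |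
        ∃ a : Fin k → Polynomial (ZMod (p ^ r)), (∀ j, ApPoly p r (a j)) ∧ x = ∑ j, a j • v j}
      = (Submodule.span (Polynomial (ZMod (p ^ r))) (Set.range v) :
          Set (Fin n → Polynomial (ZMod (p ^ r)))) := by
  have hp1 : 1 < p := hp.one_lt
  have hpr' : p ^ r ≠ 0 := pow_ne_zero r hp.pos.ne'
  have h := PspanAux.main hp1 hpr' v hv k 0 (by omega)
  have huniv : v '' {j : Fin k | 0 ≤ (j : ℕ)} = Set.range v := by
    have : {j : Fin k | 0 ≤ (j : ℕ)} = Set.univ := by ext j; simp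
    rw [this, Set.image_univ]
  rw [huniv] at h
  rw [← h]
  ext x
  constructor
  · rintro ⟨a, ha, rfl⟩
    exact ⟨a, ha, fun j hj => absurd hj (Nat.not_lt_zero _), rfl⟩
  · rintro ⟨a, ha, -, rfl⟩
    exact ⟨a, ha, rfl⟩
end

section
/- The free distance of an (n,k,δ)-convolutional code C over Z_{p^r} satisfies d(C) ≤ n(⌊δ/k⌋+1) − ⌈(k/r)(⌊δ/k⌋+1) − δ/r⌉ + 1. -/
/-- The weight of a polynomial vector over `Z_{p^r}`. -/
def wtPoly (p r n : ℕ) (v : Fin n → Polynomial (ZMod (p ^ r))) : ℕ :=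
  ∑ m : Fin n, (v m).support.card

/-- The degree of a row: the maximum of the degrees of its entries. -/
def rowDeg {R : Type*} [Semiring R] (n : ℕ) (v : Fin n → Polynomial R) : ℕ :=
  Finset.univ.sup fun m => (v m).natDegree

/-- The leading coefficient vector of a polynomial row vector. -/
def leadCoeffVec {R : Type*} [Semiring R] (n : ℕ) (v : Fin n → Polynomial R) : Fin n → R :=
  fun m => (v m).coeff (rowDeg n v)

/-- The rows of `g` form a `p`-basis of the convolutional code
`C ⊆ Z_{p^r}[D]^n` (a `Z_{p^r}[D]`-submodule): they lie in `C`, `A_p[D]`-span `C`,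
form a `p`-generator sequence and are `p`-linearly independent over `A_p[D]`. -/
def IsPEncoder (p r n k : ℕ) (g : Fin k → (Fin n → Polynomial (ZMod (p ^ r))))
    (C : Submodule (Polynomial (ZMod (p ^ r))) (Fin n → Polynomial (ZMod (p ^ r)))) : Prop :=
  (∀ i, g i ∈ C) ∧
  (∀ x ∈ C, ∃ a : Fin k → Polynomial (ZMod (p ^ r)), (∀ i, ApPoly p r (a i)) ∧
    x = ∑ i, a i • g i) ∧
  (∀ i : Fin k, ∃ a : Fin k → Polynomial (ZMod (p ^ r)), (∀ j, ApPoly p r (a j)) ∧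
    (∀ j : Fin k, (j : ℕ) ≤ (i : ℕ) → a j = 0) ∧
    (p : Polynomial (ZMod (p ^ r))) • g i = ∑ j, a j • g j) ∧
  (∀ a : Fin k → Polynomial (ZMod (p ^ r)), (∀ i, ApPoly p r (a i)) →
    ∑ i, a i • g i = 0 → ∀ i, a i = 0)

namespace SingletonAux

variable {p r n k : ℕ}

lemma appoly_zero (hp : 0 < p) : ApPoly p r 0 := fun m => ⟨0, hp, by simp⟩

lemma appoly_update {a : Fin k → Polynomial (ZMod (p ^ r))} (ha : ∀ i, ApPoly p r (a i))
    {i0 : Fin k} {d : Polynomial (ZMod (p ^ r))} (hd : ApPoly p r d) :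
    ∀ i, ApPoly p r (Function.update a i0 d i) := by
  intro i
  by_cases h : i = i0
  · subst h; simpa using hd
  · rw [Function.update_of_ne h]; exact ha i

/-- digit decomposition of a polynomial over `Z_{p^r}` -/
lemma exists_digit (hp : 0 < p) (c : Polynomial (ZMod (p ^ r))) :
    ∃ d q : Polynomial (ZMod (p ^ r)), ApPoly p r d ∧
      c = d + (p : Polynomial (ZMod (p ^ r))) * q := by
  classical
  refine ⟨∑ m ∈ c.support, Polynomial.monomial m ((((c.coeff m).val % p : ℕ)) : ZMod (p ^ r)),
      ∑ m ∈ c.support, Polynomial.monomial m ((((c.coeff m).val / p : ℕ)) : ZMod (p ^ r)),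
      ?_, ?_⟩
  · intro m
    by_cases hm : m ∈ c.support
    · refine ⟨(c.coeff m).val % p, Nat.mod_lt _ hp, ?_⟩
      simp [Polynomial.finset_sum_coeff, Polynomial.coeff_monomial, Finset.sum_ite_eq', hm]
    · refine ⟨0, hp, ?_⟩
      simp [Polynomial.finset_sum_coeff, Polynomial.coeff_monomial, Finset.sum_ite_eq', hm]
  · ext t
    have hC : ((p : ℕ) : Polynomial (ZMod (p ^ r))) = Polynomial.C ((p : ℕ) : ZMod (p ^ r)) := by
      simp
    rw [Polynomial.coeff_add, hC, Polynomial.coeff_C_mul]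
    by_cases ht : t ∈ c.support
    · simp only [Polynomial.finset_sum_coeff, Polynomial.coeff_monomial,
        Finset.sum_ite_eq', ht, if_pos]
      have h1 : ((c.coeff t).val % p + p * ((c.coeff t).val / p) : ℕ) = (c.coeff t).val :=
        Nat.mod_add_div _ _
      have h2 : (((c.coeff t).val : ℕ) : ZMod (p ^ r)) = c.coeff t := by
        haveI : NeZero (p ^ r) := ⟨pow_ne_zero _ hp.ne'⟩
        exact ZMod.natCast_rightInverse _
      calc c.coeff t = (((c.coeff t).val % p + p * ((c.coeff t).val / p) : ℕ) : ZMod (p ^ r)) := by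
            rw [h1, h2]
        _ = _ := by push_cast; ring
    · have h0 : c.coeff t = 0 := Polynomial.notMem_support_iff.mp ht
      simp [Polynomial.finset_sum_coeff, Polynomial.coeff_monomial, Finset.sum_ite_eq', ht, h0]


lemma sum_split (g : Fin k → (Fin n → Polynomial (ZMod (p ^ r))))
    (c : Fin k → Polynomial (ZMod (p ^ r))) (i0 : Fin k) :
    ∑ j, c j • g j = c i0 • g i0 + ∑ j ∈ Finset.univ.erase i0, c j • g j :=
  (Finset.add_sum_erase _ _ (Finset.mem_univ i0)).symm

lemma sum_erase_eq_ite (g : Fin k → (Fin n → Polynomial (ZMod (p ^ r))))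
    (c : Fin k → Polynomial (ZMod (p ^ r))) (i0 : Fin k) :
    ∑ j ∈ Finset.univ.erase i0, c j • g j
      = ∑ j, (if j = i0 then 0 else c j) • g j := by
  rw [sum_split g (fun j => if j = i0 then 0 else c j) i0]
  rw [if_pos rfl, zero_smul, zero_add]
  exact Finset.sum_congr rfl fun j hj => by
    rw [if_neg (Finset.ne_of_mem_erase hj)]

lemma sum_update (g : Fin k → (Fin n → Polynomial (ZMod (p ^ r))))
    (a : Fin k → Polynomial (ZMod (p ^ r))) (i0 : Fin k)
    (h0 : a i0 = 0) (d : Polynomial (ZMod (p ^ r))) :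
    ∑ j, Function.update a i0 d j • g j = d • g i0 + ∑ j, a j • g j := by
  rw [sum_split g (Function.update a i0 d) i0, Function.update_self]
  congr 1
  rw [sum_split g a i0, h0, zero_smul, zero_add]
  exact Finset.sum_congr rfl fun j hj => by
    rw [Function.update_of_ne (Finset.ne_of_mem_erase hj)]


/-- polynomial with prescribed digits `< p` in degrees `< e'` -/
noncomputable def digitPoly (p r e' : ℕ) (ψ : Fin e' → Fin p) : Polynomial (ZMod (p ^ r)) :=
  ∑ t : Fin e', Polynomial.monomial (t : ℕ) (((ψ t : ℕ)) : ZMod (p ^ r))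

lemma coeff_digitPoly (e' : ℕ) (ψ : Fin e' → Fin p) (m : ℕ) :
    (digitPoly p r e' ψ).coeff m
      = if h : m < e' then (((ψ ⟨m, h⟩ : ℕ)) : ZMod (p ^ r)) else 0 := by
  classical
  rw [digitPoly, Polynomial.finset_sum_coeff]
  split
  · next h =>
    rw [Finset.sum_eq_single (⟨m, h⟩ : Fin e')]
    · rw [Polynomial.coeff_monomial, if_pos rfl]
    · intro t _ ht
      rw [Polynomial.coeff_monomial, if_neg (fun hc => ht (Fin.ext hc))]
    · intro ht
      exact absurd (Finset.mem_univ _) ht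
  · next h =>
    apply Finset.sum_eq_zero
    intro t _
    rw [Polynomial.coeff_monomial, if_neg]
    intro hc
    exact h (hc ▸ t.isLt)

lemma appoly_digitPoly (hp : 0 < p) (e' : ℕ) (ψ : Fin e' → Fin p) :
    ApPoly p r (digitPoly p r e' ψ) := by
  intro m
  rw [coeff_digitPoly]
  split
  · exact ⟨_, (ψ _).isLt, rfl⟩
  · exact ⟨0, hp, by simp⟩

lemma natDegree_digitPoly (e' : ℕ) (ψ : Fin e' → Fin p) :
    (digitPoly p r e' ψ).natDegree ≤ e' - 1 := by
  apply Polynomial.natDegree_sum_le_of_forall_le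
  intro t _
  exact le_trans (Polynomial.natDegree_monomial_le _) (by omega)

lemma digitPoly_inj (hp : 0 < p) (hr : 0 < r) (e' : ℕ) (ψ ψ' : Fin e' → Fin p)
    (h : digitPoly p r e' ψ = digitPoly p r e' ψ') : ψ = ψ' := by
  funext t
  have := congrArg (fun z => Polynomial.coeff z (t : ℕ)) h
  simp only [coeff_digitPoly] at this
  rw [dif_pos t.isLt, dif_pos t.isLt] at this
  have hple : p ≤ p ^ r := by
    calc p = p ^ 1 := (pow_one p).symm
    _ ≤ p ^ r := Nat.pow_le_pow_right hp hr
  have h1 : ((ψ t : ℕ)) = ((ψ' t : ℕ)) := by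
    have e1 := ZMod.val_cast_of_lt (a := (ψ t : ℕ)) (n := p ^ r) (by omega)
    have e2 := ZMod.val_cast_of_lt (a := (ψ' t : ℕ)) (n := p ^ r) (by omega)
    rw [← e1, ← e2]
    simp only [Fin.eta] at this
    rw [this]
  exact Fin.ext h1


/-- Any `Z_{p^r}[D]`-combination of the rows `g_i`, supported on indices `≥ k - m`,
equals an `A_p[D]`-combination supported on the same indices. -/
lemma rewriteR (hp : 0 < p) (g : Fin k → (Fin n → Polynomial (ZMod (p ^ r))))
    (hgen : ∀ i : Fin k, ∃ a : Fin k → Polynomial (ZMod (p ^ r)), (∀ j, ApPoly p r (a j)) ∧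
      (∀ j : Fin k, (j : ℕ) ≤ (i : ℕ) → a j = 0) ∧
      (p : Polynomial (ZMod (p ^ r))) • g i = ∑ j, a j • g j) :
    ∀ m : ℕ, ∀ c : Fin k → Polynomial (ZMod (p ^ r)),
      (∀ i : Fin k, (i : ℕ) < k - m → c i = 0) →
    ∃ a : Fin k → Polynomial (ZMod (p ^ r)), (∀ i, ApPoly p r (a i)) ∧
      (∀ i : Fin k, (i : ℕ) < k - m → a i = 0) ∧ ∑ i, c i • g i = ∑ i, a i • g i := by
  intro m
  induction m with
  | zero =>
    intro c hc
    refine ⟨0, fun _ => appoly_zero hp, fun _ _ => rfl, ?_⟩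
    have : c = 0 := funext fun i => hc i i.isLt
    rw [this]
  | succ m ih =>
    intro c hc
    by_cases hkm : k - (m + 1) = k - m
    · obtain ⟨a, h1, h2, h3⟩ := ih c (fun i hi => hc i (by omega))
      exact ⟨a, h1, fun i hi => h2 i (by omega), h3⟩
    · have hi0 : k - (m + 1) < k := by omega
      set i0 : Fin k := ⟨k - (m + 1), hi0⟩ with hi0def
      obtain ⟨c0, q, hc0, hdig⟩ := exists_digit hp (c i0)
      obtain ⟨f, hfap, hf0, hfeq⟩ := hgen i0
      -- new coefficient vector
      set c'' : Fin k → Polynomial (ZMod (p ^ r)) :=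
        fun j => (if j = i0 then 0 else c j) + q * f j with hc''
      have hsum : ∑ i, c i • g i = c0 • g i0 + ∑ j, c'' j • g j := by
        rw [sum_split g c i0, hdig]
        have h1 : (c0 + (p : Polynomial (ZMod (p ^ r))) * q) • g i0
            = c0 • g i0 + ∑ j, (q * f j) • g j := by
          rw [add_smul]
          congr 1
          rw [mul_comm, mul_smul, hfeq, Finset.smul_sum]
          exact Finset.sum_congr rfl fun j _ => by rw [smul_smul]
        rw [h1, sum_erase_eq_ite g c i0, add_assoc, ← Finset.sum_add_distrib]
        congr 1
        exact Finset.sum_congr rfl fun j _ => by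
          simp only [hc'']
          rw [← add_smul, add_comm]
      have hc''supp : ∀ j : Fin k, (j : ℕ) < k - m → c'' j = 0 := by
        intro j hj
        simp only [hc'']
        by_cases hji : j = i0
        · rw [if_pos hji, hf0 j (by rw [hji]), mul_zero, add_zero]
        · have hjlt : (j : ℕ) < k - (m + 1) := by
            have : (j : ℕ) ≠ k - (m + 1) := fun h => hji (Fin.ext h)
            omega
          rw [if_neg hji, hc j hjlt, hf0 j (by show (j:ℕ) ≤ k - (m+1); omega), mul_zero, add_zero]
      obtain ⟨a', ha'ap, ha'supp, ha'eq⟩ := ih c'' hc''supp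
      refine ⟨Function.update a' i0 c0, appoly_update ha'ap hc0, ?_, ?_⟩
      · intro i hi
        have hne : i ≠ i0 := by
          intro h
          rw [h] at hi
          exact absurd hi (by simp [hi0def])
        rw [Function.update_of_ne hne]
        exact ha'supp i (by omega)
      · rw [sum_update g a' i0 (ha'supp i0 (by show k - (m+1) < k - m; omega)) c0, hsum, ha'eq]


/-- two natural digits `< p` which agree in `Z_{p^r}` up to a multiple of `p` are equal -/
lemma digit_eq (hp : 0 < p) (hr : 0 < r) {x y : ℕ} (hx : x < p) (hy : y < p)
    {t : ZMod (p ^ r)} (h : (x : ZMod (p ^ r)) = (y : ZMod (p ^ r)) + (p : ZMod (p ^ r)) * t) :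
    x = y := by
  haveI : NeZero (p ^ r) := ⟨pow_ne_zero _ hp.ne'⟩
  have hdvd : p ∣ p ^ r := dvd_pow_self p hr.ne'
  haveI : CharP (ZMod p) p := ZMod.charP p
  let π : ZMod (p ^ r) →+* ZMod p := ZMod.castHom hdvd (ZMod p)
  have h2 : (x : ZMod p) = (y : ZMod p) := by
    have := congrArg π h
    simpa [π, map_add, map_mul, map_natCast, ZMod.natCast_self] using this
  have := (ZMod.natCast_eq_natCast_iff x y p).mp h2
  have hx' : x % p = x := Nat.mod_eq_of_lt hx
  have hy' : y % p = y := Nat.mod_eq_of_lt hy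
  unfold Nat.ModEq at this
  omega

/-- Uniqueness of `A_p[D]`-representations. -/
lemma uniqueness (hp : 1 < p) (hr : 0 < r) (g : Fin k → (Fin n → Polynomial (ZMod (p ^ r))))
    (hgen : ∀ i : Fin k, ∃ a : Fin k → Polynomial (ZMod (p ^ r)), (∀ j, ApPoly p r (a j)) ∧
      (∀ j : Fin k, (j : ℕ) ≤ (i : ℕ) → a j = 0) ∧
      (p : Polynomial (ZMod (p ^ r))) • g i = ∑ j, a j • g j)
    (hindep : ∀ a : Fin k → Polynomial (ZMod (p ^ r)), (∀ i, ApPoly p r (a i)) →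
      ∑ i, a i • g i = 0 → ∀ i, a i = 0) :
    ∀ a b : Fin k → Polynomial (ZMod (p ^ r)), (∀ i, ApPoly p r (a i)) →
      (∀ i, ApPoly p r (b i)) → ∑ i, a i • g i = ∑ i, b i • g i → a = b := by
  have hp0 : 0 < p := by omega
  suffices H : ∀ m : ℕ, ∀ a b : Fin k → Polynomial (ZMod (p ^ r)), (∀ i, ApPoly p r (a i)) →
      (∀ i, ApPoly p r (b i)) → (∀ i : Fin k, (i : ℕ) < k - m → a i = 0) →
      (∀ i : Fin k, (i : ℕ) < k - m → b i = 0) →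
      ∑ i, a i • g i = ∑ i, b i • g i → a = b by
    intro a b ha hb hs
    exact H k a b ha hb (fun i hi => absurd hi (by omega)) (fun i hi => absurd hi (by omega)) hs
  intro m
  induction m with
  | zero =>
    intro a b _ _ hasupp hbsupp _
    funext i
    rw [hasupp i i.isLt, hbsupp i i.isLt]
  | succ m ih =>
    intro a b haap hbap hasupp hbsupp hsum
    by_cases hkm : k - (m + 1) = k - m
    · exact ih a b haap hbap (fun i hi => hasupp i (by omega)) (fun i hi => hbsupp i (by omega))
        hsum
    · have hi0 : k - (m + 1) < k := by omega
      set i0 : Fin k := ⟨k - (m + 1), hi0⟩ with hi0def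
      -- step 1 : a i0 = b i0
      have key : a i0 = b i0 := by
        obtain ⟨d, q, hdap, hdig⟩ := exists_digit hp0 (a i0 - b i0)
        obtain ⟨f, hfap, hf0, hfeq⟩ := hgen i0
        -- d • g i0 = ∑ c j • g j  with c supported on indices > i0
        set c : Fin k → Polynomial (ZMod (p ^ r)) :=
          fun j => ((if j = i0 then 0 else b j - a j) - q * f j) with hcdef
        have hstep : d • g i0 = ∑ j, c j • g j := by
          have hz : (a i0 - b i0) • g i0
              = ∑ j, (if j = i0 then 0 else b j - a j) • g j := by
            rw [← sum_erase_eq_ite g (fun j => b j - a j) i0]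
            have h := hsum
            rw [sum_split g a i0, sum_split g b i0] at h
            have hdist : ∑ j ∈ Finset.univ.erase i0, (b j - a j) • g j
                = (∑ j ∈ Finset.univ.erase i0, b j • g j)
                  - ∑ j ∈ Finset.univ.erase i0, a j • g j := by
              rw [← Finset.sum_sub_distrib]
              exact Finset.sum_congr rfl fun j _ => by rw [sub_smul]
            rw [hdist, sub_smul, sub_eq_sub_iff_add_eq_add, h]
            exact add_comm _ _
          have hpq : ((p : Polynomial (ZMod (p ^ r))) * q) • g i0 = ∑ j, (q * f j) • g j := by
            rw [mul_comm, mul_smul, hfeq, Finset.smul_sum]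
            exact Finset.sum_congr rfl fun j _ => by rw [smul_smul]
          have hd : d = (a i0 - b i0) - (p : Polynomial (ZMod (p ^ r))) * q := by
            rw [hdig]; ring
          rw [hd, sub_smul, hz, hpq, ← Finset.sum_sub_distrib]
          exact Finset.sum_congr rfl fun j _ => by simp only [hcdef]; rw [sub_smul]
        have hcsupp : ∀ j : Fin k, (j : ℕ) < k - m → c j = 0 := by
          intro j hj
          simp only [hcdef]
          by_cases hji : j = i0
          · rw [if_pos hji, hf0 j (by rw [hji]), mul_zero, sub_zero]
          · have hjlt : (j : ℕ) < k - (m + 1) := by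
              have : (j : ℕ) ≠ k - (m + 1) := fun h => hji (Fin.ext h)
              omega
            rw [if_neg hji, hasupp j hjlt, hbsupp j hjlt,
              hf0 j (by show (j : ℕ) ≤ k - (m + 1); omega), mul_zero, sub_zero, sub_zero]
        obtain ⟨u, huap, husupp, hueq⟩ := rewriteR hp0 g hgen m c hcsupp
        obtain ⟨u', hu'ap, hu'supp, hu'eq⟩ := rewriteR hp0 g hgen m (fun j => - u j)
          (fun j hj => by show -u j = 0; rw [husupp j hj, neg_zero])
        have hW : ∑ j, Function.update u' i0 d j • g j = 0 := by
          rw [sum_update g u' i0 (hu'supp i0 (by show k - (m + 1) < k - m; omega)) d,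
            ← hu'eq, hstep, hueq]
          rw [← Finset.sum_add_distrib]
          rw [Finset.sum_eq_zero]
          intro j _
          rw [← add_smul, add_neg_cancel, zero_smul]
        have := hindep _ (appoly_update hu'ap hdap) hW i0
        rw [Function.update_self] at this
        -- now a i0 - b i0 = p * q, conclude coefficientwise
        rw [this, zero_add] at hdig
        ext mm
        obtain ⟨x, hx, hxe⟩ := haap i0 mm
        obtain ⟨y, hy, hye⟩ := hbap i0 mm
        have hcoeff : (x : ZMod (p ^ r)) = (y : ZMod (p ^ r))
            + (p : ZMod (p ^ r)) * q.coeff mm := by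
          have := congrArg (fun z => Polynomial.coeff z mm) hdig
          simp only [Polynomial.coeff_sub] at this
          have hC : ((p : ℕ) : Polynomial (ZMod (p ^ r)))
              = Polynomial.C ((p : ℕ) : ZMod (p ^ r)) := by simp
          rw [hC, Polynomial.coeff_C_mul, hxe, hye] at this
          linear_combination this
        rw [hxe, hye, digit_eq hp0 hr hx hy hcoeff]
      -- step 2 : recurse
      have hrec : Function.update a i0 0 = Function.update b i0 0 := by
        apply ih
        · exact appoly_update haap (appoly_zero hp0)
        · exact appoly_update hbap (appoly_zero hp0)
        · intro i hi
          by_cases hii : i = i0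
          · rw [hii, Function.update_self]
          · rw [Function.update_of_ne hii]
            exact hasupp i (by
              have : (i : ℕ) ≠ k - (m + 1) := fun h => hii (Fin.ext h)
              omega)
        · intro i hi
          by_cases hii : i = i0
          · rw [hii, Function.update_self]
          · rw [Function.update_of_ne hii]
            exact hbsupp i (by
              have : (i : ℕ) ≠ k - (m + 1) := fun h => hii (Fin.ext h)
              omega)
        · have expand : ∀ cf : Fin k → Polynomial (ZMod (p ^ r)),
              ∑ j, cf j • g j = cf i0 • g i0 + ∑ j, Function.update cf i0 0 j • g j := by
            intro cf
            have h := sum_update g (Function.update cf i0 0) i0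
              (Function.update_self _ _ _) (cf i0)
            rw [Function.update_idem, Function.update_eq_self] at h
            exact h
          have h := hsum
          rw [expand a, expand b, key] at h
          exact add_left_cancel h
      funext i
      by_cases hii : i = i0
      · rw [hii]; exact key
      · have := congrFun hrec i
        rwa [Function.update_of_ne hii, Function.update_of_ne hii] at this


end SingletonAux

open SingletonAux

/-- Generalized Singleton bound (Corollary 3.1): an `(n,k,δ)`-convolutional code `C` over
`Z_{p^r}` (with a reduced `p`-encoder `g`, i.e. the leading coefficient vectors of its
rows are `p`-linearly independent, and `p`-degree `δ`) contains a nonzero codeword of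
weight at most `n(⌊δ/k⌋+1) - ⌈(k/r)(⌊δ/k⌋+1) - δ/r⌉ + 1`; hence
`d(C) ≤ n(⌊δ/k⌋+1) - ⌈(k/r)(⌊δ/k⌋+1) - δ/r⌉ + 1`. -/
theorem generalized_singleton_bound (p r n k δ : ℕ) (hp : p.Prime) (hr : 0 < r) (hk : 0 < k)
    (C : Submodule (Polynomial (ZMod (p ^ r))) (Fin n → Polynomial (ZMod (p ^ r))))
    (g : Fin k → (Fin n → Polynomial (ZMod (p ^ r))))
    (henc : IsPEncoder p r n k g C)
    (hred : ∀ a : Fin k → ℕ, (∀ i, a i < p) →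
      ∑ i, (a i : ZMod (p ^ r)) • leadCoeffVec n (g i) = 0 → ∀ i, a i = 0)
    (hδ : δ = ∑ i, rowDeg n (g i)) :
    ∃ v ∈ C, v ≠ 0 ∧ (wtPoly p r n v : ℤ) ≤
      (n : ℤ) * ((δ / k : ℕ) + 1)
        - ⌈(k : ℚ) / r * ((δ / k : ℕ) + 1) - (δ : ℚ) / r⌉ + 1 := by
  classical
  obtain ⟨hmem, _hspan, hgen, hindep⟩ := henc
  have hp0 : 0 < p := hp.pos
  have hp1 : 1 < p := hp.one_lt
  haveI : NeZero (p ^ r) := ⟨pow_ne_zero _ hp0.ne'⟩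
  -- abstract the quotient
  obtain ⟨ν, hνdef⟩ : ∃ ν, δ / k = ν := ⟨_, rfl⟩
  rw [hνdef]
  have hδν : δ < k * (ν + 1) := by
    have h1 := Nat.div_add_mod δ k
    rw [hνdef] at h1
    have h2 : δ % k < k := Nat.mod_lt _ hk
    have h3 : k * (ν + 1) = k * ν + k := by ring
    omega
  -- row degree gaps
  set e : Fin k → ℕ := fun i => ν + 1 - rowDeg n (g i) with he
  have hei : ∀ i, e i = ν + 1 - rowDeg n (g i) := fun i => by rw [he]
  set θ : ((i : Fin k) → (Fin (e i) → Fin p)) → (Fin n → Polynomial (ZMod (p ^ r))) :=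
    fun φ => ∑ i, digitPoly p r (e i) (φ i) • g i with hθ
  have θapply : ∀ (φ : (i : Fin k) → (Fin (e i) → Fin p)) (mf : Fin n),
      θ φ mf = ∑ i, digitPoly p r (e i) (φ i) * g i mf := by
    intro φ mf
    rw [hθ]
    simp [Finset.sum_apply]
  have θmem : ∀ φ, θ φ ∈ C := by
    intro φ
    rw [hθ]
    exact Submodule.sum_mem _ fun i _ => Submodule.smul_mem _ _ (hmem i)
  -- high coefficients vanish
  have hhi : ∀ (φ : (i : Fin k) → (Fin (e i) → Fin p)) (mf : Fin n) (t : ℕ),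
      ν < t → (θ φ mf).coeff t = 0 := by
    intro φ mf t ht
    rw [θapply, Polynomial.finset_sum_coeff]
    apply Finset.sum_eq_zero
    intro i _
    by_cases hez : e i = 0
    · have : digitPoly p r (e i) (φ i) = 0 := by
        apply Polynomial.ext
        intro mm
        rw [coeff_digitPoly]
        rw [dif_neg (by omega)]
        simp
      rw [this, zero_mul, Polynomial.coeff_zero]
    · apply Polynomial.coeff_eq_zero_of_natDegree_lt
      have h1 := natDegree_digitPoly (p := p) (r := r) (e i) (φ i)
      have h2 : (g i mf).natDegree ≤ rowDeg n (g i) := by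
        unfold rowDeg
        exact Finset.le_sup (f := fun m => (g i m).natDegree) (Finset.mem_univ mf)
      have h3 := Polynomial.natDegree_mul_le
        (p := digitPoly p r (e i) (φ i)) (q := g i mf)
      have h4 := hei i
      omega
  -- injectivity of θ
  have θinj : Function.Injective θ := by
    intro φ φ' hsame
    have := uniqueness hp1 hr g hgen hindep
      (fun i => digitPoly p r (e i) (φ i)) (fun i => digitPoly p r (e i) (φ' i))
      (fun i => appoly_digitPoly hp0 _ _) (fun i => appoly_digitPoly hp0 _ _) hsame
    funext i
    exact digitPoly_inj hp0 hr (e i) _ _ (congrFun this i)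
  -- counting
  obtain ⟨E, hEdef⟩ : ∃ E, (∑ i, e i) = E := ⟨_, rfl⟩
  have hcardF : Fintype.card ((i : Fin k) → (Fin (e i) → Fin p)) = p ^ E := by
    rw [Fintype.card_pi, ← hEdef]
    simp only [Fintype.card_fun, Fintype.card_fin]
    exact Finset.prod_pow_eq_pow_sum _ _ _
  -- the coordinate map
  set Λ : ((i : Fin k) → (Fin (e i) → Fin p)) → (Fin n × Fin (ν + 1) → ZMod (p ^ r)) :=
    fun φ x => (θ φ x.1).coeff (x.2 : ℕ) with hΛ
  have Λinj : Function.Injective Λ := by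
    intro φ φ' hsame
    apply θinj
    funext mf
    apply Polynomial.ext
    intro t
    by_cases ht : t < ν + 1
    · exact congrFun hsame (mf, ⟨t, ht⟩)
    · rw [hhi φ mf t (by omega), hhi φ' mf t (by omega)]
  have hEle : E ≤ r * (n * (ν + 1)) := by
    have h := Fintype.card_le_of_injective Λ Λinj
    rw [hcardF] at h
    have hc2 : Fintype.card (Fin n × Fin (ν + 1) → ZMod (p ^ r))
        = p ^ (r * (n * (ν + 1))) := by
      rw [Fintype.card_fun, ZMod.card, Fintype.card_prod, Fintype.card_fin, Fintype.card_fin,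
        ← pow_mul]
    rw [hc2] at h
    exact (Nat.pow_le_pow_iff_right hp1).mp h
  -- arithmetic with l
  obtain ⟨l, hldef⟩ : ∃ l, k * (ν + 1) - δ = l := ⟨_, rfl⟩
  have hlE : l ≤ E := by
    have h1 : k * (ν + 1) ≤ E + δ := by
      have hpt : ∀ i : Fin k, ν + 1 ≤ e i + rowDeg n (g i) := by
        intro i
        have := hei i
        omega
      calc k * (ν + 1) = ∑ _i : Fin k, (ν + 1) := by
            rw [Finset.sum_const, Finset.card_univ, Fintype.card_fin, smul_eq_mul]
        _ ≤ ∑ i, (e i + rowDeg n (g i)) := Finset.sum_le_sum fun i _ => hpt i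
        _ = E + δ := by rw [Finset.sum_add_distrib, ← hδ, hEdef]
    omega
  have hl1 : 1 ≤ l := by omega
  obtain ⟨cl, hcldef⟩ : ∃ cl, (l + r - 1) / r = cl := ⟨_, rfl⟩
  have hdm := Nat.div_add_mod (l + r - 1) r
  rw [hcldef] at hdm
  have hmod : (l + r - 1) % r < r := Nat.mod_lt _ hr
  have hclr : l ≤ r * cl := by omega
  have hcl1 : 1 ≤ cl := by
    rcases Nat.eq_zero_or_pos cl with h | h
    · rw [h, Nat.mul_zero] at hclr; omega
    · exact h
  obtain ⟨τ, hτdef⟩ : ∃ τ, cl - 1 = τ := ⟨_, rfl⟩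
  have hmulsub : r * τ = r * cl - r := by
    rw [← hτdef, Nat.mul_sub, Nat.mul_one]
  have hrτ : r * τ ≤ l - 1 := by omega
  have hτlt : τ < n * (ν + 1) := by
    have h1 : r * τ < r * (n * (ν + 1)) := by omega
    exact Nat.lt_of_mul_lt_mul_left h1
  -- choose punctured coordinates
  obtain ⟨T, _hTsub, hTcard⟩ :=
    Finset.exists_subset_card_eq (s := (Finset.univ : Finset (Fin n × Fin (ν + 1)))) (n := τ)
      (by simpa using hτlt.le)
  -- pigeonhole
  set Ψ : ((i : Fin k) → (Fin (e i) → Fin p)) → ({x // x ∈ T} → ZMod (p ^ r)) :=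
    fun φ x => Λ φ x.1 with hΨdef
  have hcardT : Fintype.card ({x // x ∈ T} → ZMod (p ^ r)) = p ^ (r * τ) := by
    rw [Fintype.card_fun, ZMod.card, Fintype.card_coe, hTcard, ← pow_mul]
  have hltcard : Fintype.card ({x // x ∈ T} → ZMod (p ^ r))
      < Fintype.card ((i : Fin k) → (Fin (e i) → Fin p)) := by
    rw [hcardT, hcardF]
    exact Nat.pow_lt_pow_right hp1 (by omega)
  obtain ⟨φ, φ', hne, hΨeq⟩ := Fintype.exists_ne_map_eq_of_card_lt Ψ hltcard
  -- the codeword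
  refine ⟨θ φ - θ φ', sub_mem (θmem φ) (θmem φ'), sub_ne_zero_of_ne fun h => hne (θinj h), ?_⟩
  set v := θ φ - θ φ' with hv
  have hvT : ∀ x ∈ T, (v x.1).coeff ((x.2 : Fin (ν + 1)) : ℕ) = 0 := by
    intro x hx
    have hcf := congrFun hΨeq ⟨x, hx⟩
    rw [hΨdef] at hcf
    rw [hv]
    simp only [Pi.sub_apply, Polynomial.coeff_sub]
    rw [sub_eq_zero]
    exact hcf
  have hvhi : ∀ (mf : Fin n) (t : ℕ), ν < t → (v mf).coeff t = 0 := by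
    intro mf t ht
    rw [hv]
    simp only [Pi.sub_apply, Polynomial.coeff_sub]
    rw [hhi φ mf t ht, hhi φ' mf t ht, sub_self]
  -- weight bound
  have hsupp : ∀ mf : Fin n, (v mf).support.card ≤
      (Finset.univ.filter fun t : Fin (ν + 1) => (mf, t) ∉ T).card := by
    intro mf
    have hle : ∀ t ∈ (v mf).support, t ≤ ν := by
      intro t ht
      by_contra hgt
      exact (Polynomial.mem_support_iff.mp ht) (hvhi mf t (by omega))
    apply Finset.card_le_card_of_injOn (fun t => (⟨min t ν, by omega⟩ : Fin (ν + 1)))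
    · intro t ht
      have htν : t ≤ ν := hle t ht
      have hmin : min t ν = t := min_eq_left htν
      simp only [Finset.mem_coe, Finset.mem_filter, Finset.mem_univ, true_and]
      intro hmemT
      apply (Polynomial.mem_support_iff.mp ht)
      have := hvT (mf, ⟨min t ν, by omega⟩) hmemT
      simpa [hmin] using this
    · intro t1 h1 t2 h2 heq
      have e1 : min t1 ν = t1 := min_eq_left (hle t1 h1)
      have e2 : min t2 ν = t2 := min_eq_left (hle t2 h2)
      have := congrArg (fun z : Fin (ν + 1) => (z : ℕ)) heq
      simp only at this
      rw [e1, e2] at this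
      exact this
  have hfib : ∀ mf : Fin n, (Finset.univ.filter fun t : Fin (ν + 1) => (mf, t) ∈ T).card
      = (T.filter fun x => x.1 = mf).card := by
    intro mf
    apply Finset.card_bij (fun t _ => ((mf, t) : Fin n × Fin (ν + 1)))
    · intro t ht
      simp only [Finset.mem_filter, Finset.mem_univ, true_and] at ht ⊢
      exact ⟨ht, trivial⟩
    · intro t1 _ t2 _ heq
      exact ((Prod.mk.injEq _ _ _ _).mp heq).2
    · intro x hx
      simp only [Finset.mem_filter] at hx
      refine ⟨x.2, ?_, ?_⟩
      · simp only [Finset.mem_filter, Finset.mem_univ, true_and]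
        rw [← hx.2]
        exact hx.1
      · rw [← hx.2]
  have hTsum : ∑ mf : Fin n, (T.filter fun x => x.1 = mf).card = τ := by
    rw [← hTcard]
    exact (Finset.card_eq_sum_card_fiberwise fun x _ => Finset.mem_univ x.1).symm
  have hsplitm : ∀ mf : Fin n,
      (Finset.univ.filter fun t : Fin (ν + 1) => (mf, t) ∈ T).card
        + (Finset.univ.filter fun t : Fin (ν + 1) => (mf, t) ∉ T).card = ν + 1 := by
    intro mf
    rw [Finset.card_filter_add_card_filter_not]
    simp
  have hwt : wtPoly p r n v + τ ≤ n * (ν + 1) := by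
    have h1 : wtPoly p r n v ≤
        ∑ mf : Fin n, (Finset.univ.filter fun t : Fin (ν + 1) => (mf, t) ∉ T).card :=
      Finset.sum_le_sum fun mf _ => hsupp mf
    have h2 : ∑ mf : Fin n,
        ((Finset.univ.filter fun t : Fin (ν + 1) => (mf, t) ∈ T).card
          + (Finset.univ.filter fun t : Fin (ν + 1) => (mf, t) ∉ T).card) = n * (ν + 1) := by
      rw [Finset.sum_congr rfl fun mf _ => hsplitm mf, Finset.sum_const, Finset.card_univ,
        Fintype.card_fin, smul_eq_mul]
    rw [Finset.sum_add_distrib] at h2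
    have h3 : ∑ mf : Fin n,
        (Finset.univ.filter fun t : Fin (ν + 1) => (mf, t) ∈ T).card = τ := by
      rw [Finset.sum_congr rfl fun mf _ => hfib mf]
      exact hTsum
    omega
  -- ceiling arithmetic
  have hrQ : (0 : ℚ) < r := by exact_mod_cast hr
  have hceil : ⌈(k : ℚ) / r * ((ν : ℚ) + 1) - (δ : ℚ) / r⌉ ≤ (cl : ℤ) := by
    have hexpr : (k : ℚ) / r * ((ν : ℚ) + 1) - (δ : ℚ) / r = (l : ℚ) / r := by
      have hcast : (l : ℚ) = (k : ℚ) * ((ν : ℚ) + 1) - (δ : ℚ) := by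
        rw [← hldef]
        have h5 : ((k * (ν + 1) - δ : ℕ) : ℚ) = ((k * (ν + 1) : ℕ) : ℚ) - (δ : ℚ) :=
          Nat.cast_sub hδν.le
        rw [h5]
        push_cast
        ring
      rw [hcast]
      field_simp
    rw [hexpr, Int.ceil_le]
    push_cast
    rw [div_le_iff₀ hrQ]
    calc (l : ℚ) ≤ (r : ℚ) * (cl : ℚ) := by exact_mod_cast hclr
      _ = (cl : ℚ) * (r : ℚ) := by ring
  have hwtZ : (wtPoly p r n v : ℤ) + (τ : ℤ) ≤ (n : ℤ) * ((ν : ℤ) + 1) := by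
    have h6 : ((n * (ν + 1) : ℕ) : ℤ) = (n : ℤ) * ((ν : ℤ) + 1) := by push_cast; ring
    have h7 : (wtPoly p r n v : ℤ) + (τ : ℤ) ≤ ((n * (ν + 1) : ℕ) : ℤ) := by
      exact_mod_cast hwt
    omega
  have hclτ : (cl : ℤ) = (τ : ℤ) + 1 := by omega
  linarith [hceil, hwtZ, hclτ]
end

section
/- Let G̃(D) ∈ Z_p[D]^{k̃×n} be lifted to Z_{p^r}[D] and let G(D) be the matrix over Z_{p^r}[D] whose rows are p^j·G̃_{k_i}(D) for blocks G̃_{k_i} of G̃ and i ≤ j ≤ r−1 (as in equation (2) of the paper). If the rows of G̃(D) all have degree ν and G̃(D) is in reduced form (its leading coefficient matrix has full row rank over Z_p), then G(D) is a p-encoder in reduced form: its rows form a p-generator sequence, are p-linearly independent, its leading coefficient vectors are p-linearly independent over Z_{p^r}, and all its row degrees equal ν. -/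
section Aux

variable {p r : ℕ}

/-- `(p : ZMod (p^r))^e = 0` when `r ≤ e`. -/
lemma ppow_zero {e : ℕ} (he : r ≤ e) : (p : ZMod (p^r))^e = 0 := by
  rw [← Nat.cast_pow, ZMod.natCast_eq_zero_iff]
  exact pow_dvd_pow p he

lemma ppow_C (e : ℕ) :
    (p : Polynomial (ZMod (p^r)))^e = Polynomial.C ((p : ZMod (p^r))^e) := by
  rw [map_pow, Polynomial.C_eq_natCast]

lemma ppow_poly_zero {e : ℕ} (he : r ≤ e) :
    (p : Polynomial (ZMod (p^r)))^e = 0 := by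
  rw [ppow_C, ppow_zero he, map_zero]

/-- small naturals: `(c : ZMod p) = 0` with `c < p` forces `c = 0`. -/
lemma small_eq_zero {c : ℕ} (hc : c < p) (h : (c : ZMod p) = 0) : c = 0 :=
  Nat.eq_zero_of_dvd_of_lt ((ZMod.natCast_eq_zero_iff c p).mp h) hc

/-- `p^j * c ≠ 0` in `ZMod (p^r)` for `0 < c < p`, `j < r`. -/
lemma ppow_mul_ap_ne_zero (hp : p.Prime) {j c : ℕ} (hj : j < r) (hc : c < p) (hc0 : c ≠ 0) :
    (p : ZMod (p^r))^j * (c : ZMod (p^r)) ≠ 0 := by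
  intro h
  rw [← Nat.cast_pow, ← Nat.cast_mul, ZMod.natCast_eq_zero_iff] at h
  have h1 : 0 < p^j * c := Nat.mul_pos (pow_pos hp.pos j) (Nat.pos_of_ne_zero hc0)
  have h2 : p^j * c < p^r := by
    calc p^j * c < p^j * p := Nat.mul_lt_mul_of_le_of_lt (le_refl _) hc (pow_pos hp.pos j)
      _ = p^(j+1) := (pow_succ p j).symm
      _ ≤ p^r := Nat.pow_le_pow_right hp.pos hj
  exact absurd (Nat.le_of_dvd h1 h) (not_le.mpr h2)

/-- If `p^(r-1) * x = 0` in `ZMod (p^r)` then the reduction of `x` mod `p` is zero. -/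
lemma kill (hp : p.Prime) (hr : 0 < r) {x : ZMod (p^r)}
    (h : (p : ZMod (p^r))^(r-1) * x = 0) :
    ZMod.castHom (dvd_pow_self p hr.ne') (ZMod p) x = 0 := by
  haveI : NeZero (p^r) := ⟨(pow_pos hp.pos r).ne'⟩
  have hx : ((x.val : ℕ) : ZMod (p^r)) = x := by rw [ZMod.natCast_val, ZMod.cast_id]
  have h' : ((p^(r-1) * x.val : ℕ) : ZMod (p^r)) = 0 := by
    push_cast
    rw [ZMod.natCast_val, ZMod.cast_id]
    exact h
  have hdvd : p^r ∣ p^(r-1) * x.val := (ZMod.natCast_eq_zero_iff _ _).mp h'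
  have hpx : p ∣ x.val := by
    have h2 : p^(r-1) * p ∣ p^(r-1) * x.val := by
      rw [← pow_succ]
      have : r - 1 + 1 = r := Nat.succ_pred_eq_of_pos hr
      rwa [this]
    exact (Nat.mul_dvd_mul_iff_left (pow_pos hp.pos (r-1))).mp h2
  have : ((x.val : ℕ) : ZMod p) = 0 := (ZMod.natCast_eq_zero_iff _ _).mpr hpx
  calc ZMod.castHom (dvd_pow_self p hr.ne') (ZMod p) x
      = ZMod.castHom (dvd_pow_self p hr.ne') (ZMod p) ((x.val : ℕ) : ZMod (p^r)) := by rw [hx]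
    _ = ((x.val : ℕ) : ZMod p) := map_natCast _ _
    _ = 0 := this

/-- An `A_p` polynomial whose reduction mod `p` is zero is zero. -/
lemma ap_eq_zero (hp : p.Prime) (hr : 0 < r) {a : Polynomial (ZMod (p^r))}
    (ha : ApPoly p r a)
    (h : a.map (ZMod.castHom (dvd_pow_self p hr.ne') (ZMod p)) = 0) : a = 0 := by
  ext m
  obtain ⟨c, hc, hcm⟩ := ha m
  have h1 : (a.map (ZMod.castHom (dvd_pow_self p hr.ne') (ZMod p))).coeff m = 0 := by
    rw [h]; simp
  rw [Polynomial.coeff_map, hcm, map_natCast] at h1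
  have : c = 0 := small_eq_zero hc h1
  rw [hcm, this]
  simp

lemma apPoly_zero (hp : p.Prime) : ApPoly p r 0 :=
  fun m => ⟨0, hp.pos, by simp⟩

lemma apPoly_one (hp : p.Prime) : ApPoly p r 1 := by
  intro m
  rcases Nat.eq_zero_or_pos m with hm | hm
  · exact ⟨1, hp.one_lt, by simp [hm]⟩
  · exact ⟨0, hp.pos, by simp [Polynomial.coeff_one, hm.ne']⟩

lemma apPoly_C (hp : p.Prime) {x : ZMod (p^r)} {c : ℕ} (hc : c < p) (hx : x = (c : ZMod (p^r))) :
    ApPoly p r (Polynomial.C x) := by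
  intro m
  rcases Nat.eq_zero_or_pos m with hm | hm
  · exact ⟨c, hc, by simp [hm, hx]⟩
  · exact ⟨0, hp.pos, by simp [Polynomial.coeff_C, hm.ne']⟩

lemma apPoly_natCast (hp : p.Prime) {c : ℕ} (hc : c < p) :
    ApPoly p r ((c : ℕ) : Polynomial (ZMod (p^r))) := by
  rw [← Polynomial.C_eq_natCast]
  exact apPoly_C hp hc rfl

end Aux

section LI

/-- Rows of polynomials with entry degrees ≤ ν whose coefficient-ν vectors are linearly
independent are linearly independent over the polynomial ring. -/
lemma polyLI {K : Type*} [CommRing K] {n kt ν : ℕ} (u : Fin kt → Fin n → Polynomial K)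
    (hdeg : ∀ i m, (u i m).natDegree ≤ ν)
    (hred : ∀ g : Fin kt → K, ∑ i, g i • (fun m => (u i m).coeff ν) = 0 → ∀ i, g i = 0) :
    ∀ b : Fin kt → Polynomial K, ∑ i, b i • u i = 0 → ∀ i, b i = 0 := by
  have aux : ∀ μ : ℕ, ∀ b : Fin kt → Polynomial K, (∀ i k, μ ≤ k → (b i).coeff k = 0) →
      ∑ i, b i • u i = 0 → ∀ i, b i = 0 := by
    intro μ
    induction μ with
    | zero =>
      intro b hb _ i
      ext k
      simpa using hb i k (Nat.zero_le k)
    | succ μ IH =>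
      intro b hb hsum
      have hc : ∀ i, (b i).coeff μ = 0 := by
        apply hred
        funext m
        have h0 : (∑ i, b i • u i) m = 0 := by rw [hsum]; rfl
        rw [Finset.sum_apply] at h0
        have h1 : ∑ i, (b i * u i m).coeff (μ + ν) = 0 := by
          rw [← Polynomial.finset_sum_coeff]
          have : ∑ i, b i * u i m = (0 : Polynomial K) := by
            simpa [Pi.smul_apply, smul_eq_mul] using h0
          rw [this, Polynomial.coeff_zero]
        have h2 : ∀ i : Fin kt, (b i * u i m).coeff (μ + ν) = (b i).coeff μ * (u i m).coeff ν := by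
          intro i
          rw [Polynomial.coeff_mul]
          apply Finset.sum_eq_single (μ, ν)
          · intro x hx hne
            have hxa : x.1 + x.2 = μ + ν := Finset.HasAntidiagonal.mem_antidiagonal.mp hx
            rcases Nat.lt_trichotomy x.1 μ with h | h | h
            · have hν : ν < x.2 := by omega
              exact mul_eq_zero_of_right _
                (Polynomial.coeff_eq_zero_of_natDegree_lt (lt_of_le_of_lt (hdeg i m) hν))
            · exact absurd (Prod.ext h (by omega)) hne
            · exact mul_eq_zero_of_left (hb i x.1 h) _
          · intro h
            exact absurd (by simp : (μ, ν) ∈ Finset.HasAntidiagonal.antidiagonal (μ + ν)) h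
        rw [Finset.sum_apply]
        simp only [Pi.smul_apply, smul_eq_mul, Pi.zero_apply]
        rw [← h1]
        exact Finset.sum_congr rfl fun i _ => (h2 i).symm
      refine IH b ?_ hsum
      intro i k hk
      rcases Nat.eq_or_lt_of_le hk with h | h
      · rw [← h]; exact hc i
      · exact hb i k h
  intro b hsum i
  refine aux ((Finset.univ.sup fun i' => (b i').natDegree) + 1) b ?_ hsum i
  intro i' k hk
  apply Polynomial.coeff_eq_zero_of_natDegree_lt
  calc (b i').natDegree ≤ Finset.univ.sup fun i'' => (b i'').natDegree :=
        Finset.le_sup (f := fun i'' => (b i'').natDegree) (Finset.mem_univ i')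
    _ < k := hk

/-- Reindex a sum over the subtype `{q : Fin kt × Fin r // e q.1 ≤ q.2}` supported on the
layer `q.2 = j` as a sum over `Fin kt`. -/
lemma sum_layer {kt r : ℕ} {e : Fin kt → ℕ} {M : Type*} [AddCommMonoid M]
    {j : ℕ} (hj : j < r)
    (f : {q : Fin kt × Fin r // e q.1 ≤ (q.2 : ℕ)} → M) (F : Fin kt → M)
    (hf0 : ∀ s, ((s.val.2 : ℕ) ≠ j) → f s = 0)
    (hF0 : ∀ i, ¬ e i ≤ j → F i = 0)
    (hmatch : ∀ s, ((s.val.2 : ℕ) = j) → f s = F s.val.1) :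
    ∑ s, f s = ∑ i, F i := by
  classical
  rw [← Finset.sum_filter_of_ne (p := fun s => (s.val.2 : ℕ) = j)
      (fun s _ hf => by by_contra h; exact hf (hf0 s h)),
    ← Finset.sum_filter_of_ne (p := fun i => e i ≤ j)
      (fun i _ hF => by by_contra h; exact hF (hF0 i h))]
  refine Finset.sum_bij' (fun s _ => s.val.1)
    (fun i hi => ⟨(i, ⟨j, hj⟩), by simpa using (Finset.mem_filter.mp hi).2⟩)
    ?_ ?_ ?_ ?_ ?_
  · intro s hs
    have hs2 := Finset.mem_filter.mp hs
    refine Finset.mem_filter.mpr ⟨Finset.mem_univ _, ?_⟩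
    calc e s.val.1 ≤ (s.val.2 : ℕ) := s.prop
      _ = j := hs2.2
  · intro i hi
    refine Finset.mem_filter.mpr ⟨Finset.mem_univ _, rfl⟩
  · intro s hs
    have hs2 := (Finset.mem_filter.mp hs).2
    apply Subtype.ext
    obtain ⟨⟨i1, j1⟩, hq⟩ := s
    simp only at hs2 ⊢
    exact congrArg (Prod.mk i1) (Fin.ext (show j = (j1 : ℕ) from hs2.symm))
  · intro i hi
    rfl
  · intro s hs
    exact hmatch s (Finset.mem_filter.mp hs).2

end LI

section Core

lemma core {p r n kt ν : ℕ} (hp : p.Prime) (hr : 0 < r)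
    (v : Fin kt → (Fin n → Polynomial (ZMod (p ^ r))))
    (e : Fin kt → ℕ)
    (hvdeg : ∀ i m, (v i m).natDegree ≤ ν)
    (hred : ∀ g : Fin kt → ZMod p,
      ∑ i, g i • (fun m : Fin n =>
        (ZMod.castHom (dvd_pow_self p hr.ne') (ZMod p)) ((v i m).coeff ν)) = 0 →
      ∀ i, g i = 0)
    (a : {q : Fin kt × Fin r // e q.1 ≤ (q.2 : ℕ)} → Polynomial (ZMod (p ^ r)))
    (hApa : ∀ s, ApPoly p r (a s))
    (hsum : ∑ s, a s • (((p : Polynomial (ZMod (p ^ r))) ^ ((s.val.2 : ℕ))) • v s.val.1) = 0) :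
    ∀ s, a s = 0 := by
  classical
  set π := ZMod.castHom (dvd_pow_self p hr.ne') (ZMod p) with hπ
  have key : ∀ j : ℕ, ∀ s, (s.val.2 : ℕ) = j → a s = 0 := by
    intro j
    induction j using Nat.strong_induction_on with
    | _ j IH =>
      intro s hsj
      have hj : j < r := hsj ▸ (s.val.2).isLt
      have h1 : ∑ t, (((p : Polynomial (ZMod (p^r)))^(r-1-j) *
          (p : Polynomial (ZMod (p^r)))^((t.val.2 : ℕ))) * a t) • v t.val.1 = 0 := by
        have h0 := congrArg (fun x => ((p : Polynomial (ZMod (p^r)))^(r-1-j)) • x) hsum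
        simp only [Finset.smul_sum, smul_zero] at h0
        rw [← h0]
        refine Finset.sum_congr rfl fun t _ => ?_
        rw [smul_smul, smul_smul]
        congr 1
        ring
      have h2 : ∑ t, (if (t.val.2 : ℕ) = j then
          ((p : Polynomial (ZMod (p^r)))^(r-1) * a t) • v t.val.1 else 0) = 0 := by
        refine Eq.trans (Finset.sum_congr rfl fun t _ => ?_) h1
        by_cases ht : (t.val.2 : ℕ) = j
        · rw [if_pos ht]
          congr 2
          rw [← pow_add]
          congr 1
          omega
        · rw [if_neg ht]
          rcases Nat.lt_or_ge (t.val.2 : ℕ) j with h | h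
          · rw [IH _ h t rfl, mul_zero, zero_smul]
          · have hgt : j < (t.val.2 : ℕ) := lt_of_le_of_ne h (Ne.symm ht)
            have hz : (p : Polynomial (ZMod (p^r)))^(r-1-j) *
                (p : Polynomial (ZMod (p^r)))^((t.val.2 : ℕ)) = 0 := by
              rw [← pow_add]
              exact ppow_poly_zero (by omega)
            rw [hz, zero_mul, zero_smul]
      set X : Fin n → Polynomial (ZMod (p^r)) :=
        ∑ t, (if (t.val.2 : ℕ) = j then a t • v t.val.1 else 0) with hX
      have hXkill : (p : Polynomial (ZMod (p^r)))^(r-1) • X = 0 := by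
        rw [hX, Finset.smul_sum]
        refine Eq.trans (Finset.sum_congr rfl fun t _ => ?_) h2
        by_cases ht : (t.val.2 : ℕ) = j
        · rw [if_pos ht, if_pos ht, smul_smul]
        · rw [if_neg ht, if_neg ht, smul_zero]
      have hXmap : ∀ m, (X m).map π = 0 := by
        intro m
        ext k
        rw [Polynomial.coeff_map, Polynomial.coeff_zero]
        apply kill hp hr
        have h3 := congrFun hXkill m
        rw [Pi.smul_apply, smul_eq_mul, ppow_C, Pi.zero_apply] at h3
        have h4 := congrArg (fun q => Polynomial.coeff q k) h3
        simp only [Polynomial.coeff_C_mul, Polynomial.coeff_zero] at h4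
        exact h4
      have h5 : ∑ t, (fun m => ((if (t.val.2 : ℕ) = j then a t • v t.val.1 else
          (0 : Fin n → Polynomial (ZMod (p^r)))) m).map π) =
          (0 : Fin n → Polynomial (ZMod p)) := by
        funext m
        rw [Finset.sum_apply, Pi.zero_apply]
        calc ∑ t, ((if (t.val.2 : ℕ) = j then a t • v t.val.1 else
              (0 : Fin n → Polynomial (ZMod (p^r)))) m).map π
            = (Polynomial.mapRingHom π) ((∑ t, (if (t.val.2 : ℕ) = j then a t • v t.val.1 else
              (0 : Fin n → Polynomial (ZMod (p^r))))) m) := by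
              rw [Finset.sum_apply, map_sum]
              rfl
          _ = (X m).map π := by rw [hX]; rfl
          _ = 0 := hXmap m
      set b : Fin kt → Polynomial (ZMod p) :=
        fun i => if h : e i ≤ j then (a ⟨(i, ⟨j, hj⟩), h⟩).map π else 0 with hb
      have h6 : ∑ i, b i • (fun m => (v i m).map π) = (0 : Fin n → Polynomial (ZMod p)) := by
        rw [← h5]
        symm
        refine sum_layer hj _ _ ?_ ?_ ?_
        · intro t ht
          funext m
          rw [if_neg ht]
          simp
        · intro i hi
          rw [hb]
          simp only [dif_neg hi, zero_smul]
        · intro t ht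
          have h' : e t.val.1 ≤ j := le_of_le_of_eq t.prop ht
          have hteq : (⟨(t.val.1, ⟨j, hj⟩), h'⟩ :
              {q : Fin kt × Fin r // e q.1 ≤ (q.2 : ℕ)}) = t := by
            apply Subtype.ext
            obtain ⟨⟨i1, j1⟩, hq⟩ := t
            simp only at ht ⊢
            exact congrArg (Prod.mk i1) (Fin.ext (show j = (j1 : ℕ) from ht.symm))
          funext m
          rw [if_pos ht, hb]
          simp only [dif_pos h', hteq, Pi.smul_apply, smul_eq_mul, Polynomial.map_mul]
      have h7 := polyLI (fun i m => (v i m).map π)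
        (fun i m => le_trans Polynomial.natDegree_map_le (hvdeg i m))
        (fun g hg => hred g (by simpa [Polynomial.coeff_map] using hg)) b h6
      have h8 : e s.val.1 ≤ j := le_of_le_of_eq s.prop hsj
      have h9 := h7 s.val.1
      rw [hb] at h9
      simp only [dif_pos h8] at h9
      have hseq : (⟨(s.val.1, ⟨j, hj⟩), h8⟩ :
          {q : Fin kt × Fin r // e q.1 ≤ (q.2 : ℕ)}) = s := by
        apply Subtype.ext
        obtain ⟨⟨i1, j1⟩, hq⟩ := s
        simp only at hsj ⊢
        exact congrArg (Prod.mk i1) (Fin.ext (show j = (j1 : ℕ) from hsj.symm))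
      rw [hseq] at h9
      exact ap_eq_zero hp hr (hApa s) h9
  intro s
  exact key (s.val.2 : ℕ) s rfl

end Core

/-- Lemma 4.1: let `G̃(D) ∈ Z_p[D]^{k̃ × n}` be lifted to `Z_{p^r}[D]` (all entries have
coefficients in `A_p = {0,...,p-1}`), with all row degrees equal to `ν` and in reduced
form (the leading coefficient matrix has full row rank over `Z_p`). Let `e i < r` be the
block index of row `i`, and let `G(D)` be the lifted matrix whose rows are
`p^j • G̃_i(D)` for `e i ≤ j ≤ r - 1`, ordered lexicographically (within a block by
increasing power `j`, as in eq. (2) of the paper). Then `G(D)` is a `p`-encoder in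
reduced form: its rows form a `p`-generator sequence (w.r.t. this order), are
`p`-linearly independent over `A_p[D]`, their leading coefficient vectors are
`p`-linearly independent over `Z_{p^r}`, and all its row degrees equal `ν`. -/
theorem lifted_p_encoder (p r n kt ν : ℕ) (hp : p.Prime) (hr : 0 < r)
    (v : Fin kt → (Fin n → Polynomial (ZMod (p ^ r))))
    (e : Fin kt → ℕ) (he : ∀ i, e i < r)
    (hAp : ∀ i m, ApPoly p r (v i m))
    (hdeg : ∀ i, rowDeg n (v i) = ν)
    (hred : LinearIndependent (ZMod p)
      (fun i : Fin kt => fun m : Fin n =>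
        (ZMod.castHom (dvd_pow_self p hr.ne') (ZMod p)) ((v i m).coeff ν))) :
    ∀ w : {q : Fin kt × Fin r // e q.1 ≤ (q.2 : ℕ)} → (Fin n → Polynomial (ZMod (p ^ r))),
      (w = fun q => ((p : Polynomial (ZMod (p ^ r))) ^ (q.val.2 : ℕ)) • v q.val.1) →
      -- (a) the rows of the lifted matrix form a p-generator sequence for the lex order
      ((∀ q, ∃ a : {q : Fin kt × Fin r // e q.1 ≤ (q.2 : ℕ)} → Polynomial (ZMod (p ^ r)),
          (∀ s, ApPoly p r (a s)) ∧
          (∀ s, ¬ (q.val.1 < s.val.1 ∨ (q.val.1 = s.val.1 ∧ q.val.2 < s.val.2)) → a s = 0) ∧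
          (p : Polynomial (ZMod (p ^ r))) • w q = ∑ s, a s • w s) ∧
      -- (b) the rows are p-linearly independent over A_p[D]
      (∀ a : {q : Fin kt × Fin r // e q.1 ≤ (q.2 : ℕ)} → Polynomial (ZMod (p ^ r)),
          (∀ s, ApPoly p r (a s)) → ∑ s, a s • w s = 0 → ∀ s, a s = 0) ∧
      -- (c) the leading coefficient vectors are p-linearly independent over Z_{p^r}
      (∀ a : {q : Fin kt × Fin r // e q.1 ≤ (q.2 : ℕ)} → ℕ, (∀ s, a s < p) →
          ∑ s, (a s : ZMod (p ^ r)) • (fun m : Fin n => (w s m).coeff ν) = 0 →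
          ∀ s, a s = 0) ∧
      -- (d) all row degrees equal ν
      (∀ q, rowDeg n (w q) = ν)) := by
  intro w hw
  have hvdeg : ∀ i m, (v i m).natDegree ≤ ν := by
    intro i m
    rw [← hdeg i]
    exact Finset.le_sup (f := fun m => (v i m).natDegree) (Finset.mem_univ m)
  have hred' := Fintype.linearIndependent_iff.mp hred
  have hwcoeff : ∀ s m, (w s m).coeff ν =
      (p : ZMod (p^r))^((s.val.2 : ℕ)) * ((v s.val.1 m).coeff ν) := by
    intro s m
    rw [hw]
    simp only [Pi.smul_apply, smul_eq_mul]
    rw [ppow_C, Polynomial.coeff_C_mul]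
  refine ⟨?_, ?_, ?_, ?_⟩
  · -- (a) p-generator sequence
    intro q
    by_cases hq : (q.val.2 : ℕ) + 1 < r
    · set s₀ : {q : Fin kt × Fin r // e q.1 ≤ (q.2 : ℕ)} :=
        ⟨(q.val.1, ⟨(q.val.2 : ℕ) + 1, hq⟩), le_trans q.prop (Nat.le_succ _)⟩ with hs₀
      refine ⟨fun s => if s = s₀ then 1 else 0, ?_, ?_, ?_⟩
      · intro s
        dsimp only
        by_cases h : s = s₀
        · rw [if_pos h]; exact apPoly_one hp
        · rw [if_neg h]; exact apPoly_zero hp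
      · intro s hns
        dsimp only
        by_cases h : s = s₀
        · exact absurd (Or.inr ⟨by rw [h, hs₀], by
            rw [h, hs₀]; exact (Fin.lt_def).mpr (Nat.lt_succ_self _)⟩) hns
        · rw [if_neg h]
      · have hsum : ∑ s, (if s = s₀ then (1 : Polynomial (ZMod (p^r))) else 0) • w s
            = w s₀ := by
          rw [Finset.sum_eq_single s₀]
          · rw [if_pos rfl, one_smul]
          · intro s _ h
            rw [if_neg h, zero_smul]
          · intro h
            exact absurd (Finset.mem_univ _) h
        rw [hsum, hw]
        simp only
        rw [smul_smul, ← pow_succ']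
    · refine ⟨fun _ => 0, fun s => apPoly_zero hp, fun s _ => rfl, ?_⟩
      simp only [zero_smul, Finset.sum_const_zero]
      rw [hw]
      simp only
      rw [smul_smul, ← pow_succ', ppow_poly_zero (by omega : r ≤ (q.val.2 : ℕ) + 1),
        zero_smul]
  · -- (b) p-linear independence
    intro a hApa hsum
    refine core hp hr v e hvdeg hred' a hApa ?_
    rw [← hsum, hw]
  · -- (c) leading coefficients p-linearly independent
    intro a ha hsum
    have hv'deg : ∀ i m, ((fun i m => Polynomial.C ((v i m).coeff ν) :
        Fin kt → Fin n → Polynomial (ZMod (p^r))) i m).natDegree ≤ 0 :=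
      fun i m => le_of_eq (Polynomial.natDegree_C _)
    have hred'' : ∀ g : Fin kt → ZMod p,
        ∑ i, g i • (fun m : Fin n => (ZMod.castHom (dvd_pow_self p hr.ne') (ZMod p))
          ((Polynomial.C ((v i m).coeff ν)).coeff 0)) = 0 → ∀ i, g i = 0 := by
      intro g hg
      apply hred' g
      simpa only [Polynomial.coeff_C_zero] using hg
    have hm' : ∀ m, ∑ s, (a s : ZMod (p^r)) * ((w s m).coeff ν) = 0 := by
      intro m
      have hm := congrFun hsum m
      rw [Finset.sum_apply, Pi.zero_apply] at hm
      simpa only [Pi.smul_apply, smul_eq_mul] using hm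
    have hsum' : ∑ s, ((a s : ℕ) : Polynomial (ZMod (p^r))) •
        (((p : Polynomial (ZMod (p^r)))^((s.val.2 : ℕ))) •
          (fun m => Polynomial.C ((v s.val.1 m).coeff ν))) = 0 := by
      funext m
      rw [Finset.sum_apply, Pi.zero_apply]
      calc ∑ s, (((a s : ℕ) : Polynomial (ZMod (p^r))) •
              (((p : Polynomial (ZMod (p^r)))^((s.val.2 : ℕ))) •
                (fun m => Polynomial.C ((v s.val.1 m).coeff ν)))) m
          = ∑ s, Polynomial.C ((a s : ZMod (p^r)) * ((w s m).coeff ν)) := by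
            refine Finset.sum_congr rfl fun s _ => ?_
            simp only [Pi.smul_apply, smul_eq_mul]
            rw [show ((a s : ℕ) : Polynomial (ZMod (p^r))) =
                Polynomial.C ((a s : ℕ) : ZMod (p^r)) from (Polynomial.C_eq_natCast _).symm,
              ppow_C, ← map_mul, ← map_mul]
            congr 1
            rw [hwcoeff s m]
        _ = Polynomial.C (∑ s, (a s : ZMod (p^r)) * ((w s m).coeff ν)) := (map_sum _ _ _).symm
        _ = 0 := by rw [hm' m, map_zero]
    have h := core hp hr (fun i m => Polynomial.C ((v i m).coeff ν)) e hv'deg hred''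
      (fun s => ((a s : ℕ) : Polynomial (ZMod (p^r))))
      (fun s => apPoly_natCast hp (ha s)) hsum'
    intro s
    have h1 := h s
    rw [show ((a s : ℕ) : Polynomial (ZMod (p^r))) =
        Polynomial.C ((a s : ℕ) : ZMod (p^r)) from (Polynomial.C_eq_natCast _).symm] at h1
    have h2 : ((a s : ℕ) : ZMod (p^r)) = 0 := by
      exact_mod_cast Polynomial.C_eq_zero.mp h1
    have h3 : p^r ∣ a s := (ZMod.natCast_eq_zero_iff _ _).mp h2
    have h4 : a s < p^r := lt_of_lt_of_le (ha s)
      (le_trans (le_of_eq (pow_one p).symm) (Nat.pow_le_pow_right hp.pos hr))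
    exact Nat.eq_zero_of_dvd_of_lt h3 h4
  · -- (d) row degrees
    intro q
    have hq2 : (q.val.2 : ℕ) < r := (q.val.2).isLt
    have hdm : ∀ m, (((p : Polynomial (ZMod (p^r)))^((q.val.2 : ℕ))) *
        v q.val.1 m).natDegree = (v q.val.1 m).natDegree := by
      intro m
      by_cases hvm : v q.val.1 m = 0
      · rw [hvm, mul_zero]
      · refine le_antisymm ?_ ?_
        · rw [ppow_C]
          exact Polynomial.natDegree_C_mul_le _ _
        · apply Polynomial.le_natDegree_of_ne_zero
          rw [ppow_C, Polynomial.coeff_C_mul]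
          obtain ⟨c, hc, hcoef⟩ := hAp q.val.1 m ((v q.val.1 m).natDegree)
          rw [hcoef]
          have hc0 : c ≠ 0 := by
            intro h0
            exact hvm (Polynomial.leadingCoeff_eq_zero.mp
              (by rw [Polynomial.leadingCoeff, hcoef, h0, Nat.cast_zero]))
          exact ppow_mul_ap_ne_zero hp hq2 hc hc0
    rw [hw]
    simp only
    rw [show rowDeg n (((p : Polynomial (ZMod (p^r)))^((q.val.2 : ℕ))) • v q.val.1)
        = rowDeg n (v q.val.1) from ?_, hdeg]
    unfold rowDeg
    refine Finset.sup_congr rfl fun m _ => ?_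
    rw [Pi.smul_apply, smul_eq_mul]
    exact hdm m
end
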